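/- arXiv:1509.07273 — 5 statements merged into one kernel-verified Lean document; each statement's English description precedes it below -/
import Mathlib

section
/- Let 𝔇 ⊂ ℝ be a ℚ-vector subspace with 𝔇 ≠ {0}, and let u : (0,1) ∩ 𝔇 → ℝ satisfy, for some f ∈ L¹_loc(0,1), the weighted convexity inequality u((1-t)r₀+tr₁) ≤ (1-t)u(r₀)+tu(r₁) - (r₁-r₀)² ∫₀¹ f((1-s)r₀+sr₁) g(s,t) ds for all r₀, r₁ ∈ (0,1) ∩ 𝔇 and t ∈ [0,1] such that (1-t)r₀+tr₁ ∈ 𝔇. Then u is locally Lipschitz: for every closed subinterval [a,b] ⊂ (0,1) there exists C ≥ 0 such that |u(x)-u(y)| ≤ C|x-y| for all x, y ∈ (a,b) ∩ 𝔇. -/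
set_option maxHeartbeats 1000000

open MeasureTheory Set

/-- The Green function of the interval `[0,1]`. -/
noncomputable def green (s t : ℝ) : ℝ := if s ≤ t then (1 - t) * s else t * (1 - s)

lemma green_abs_le {s t : ℝ} (hs : s ∈ Icc (0:ℝ) 1) (ht : t ∈ Icc (0:ℝ) 1) :
    |green s t| ≤ t * (1 - t) := by
  obtain ⟨hs0, hs1⟩ := hs; obtain ⟨ht0, ht1⟩ := ht
  unfold green
  split_ifs with h
  · rw [abs_of_nonneg (by nlinarith)]; nlinarith
  · push_neg at h
    rw [abs_of_nonneg (by nlinarith)]; nlinarith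


lemma int_bound (f : ℝ → ℝ) (a' b' r₀ r₁ t : ℝ)
    (hK : IntervalIntegrable (fun y => |f y|) volume a' b')
    (ha : a' ≤ r₀) (hb : r₁ ≤ b') (hr : r₀ < r₁) (ht : t ∈ Icc (0:ℝ) 1) :
    |∫ s in Ioo (0:ℝ) 1, f ((1 - s) * r₀ + s * r₁) * green s t| ≤
      (∫ y in a'..b', |f y|) * (t * (1 - t)) / (r₁ - r₀) := by
  have hc : r₁ - r₀ ≠ 0 := by linarith
  have hc0 : (0:ℝ) < r₁ - r₀ := by linarith
  have hI : IntervalIntegrable (fun y => |f y|) volume r₀ r₁ := by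
    apply hK.mono_set
    rw [uIcc_of_le hr.le, uIcc_of_le (by linarith)]
    exact Icc_subset_Icc ha hb
  have hcomp : IntervalIntegrable (fun s => |f ((r₁ - r₀) * s + r₀)|) volume 0 1 := by
    have h1 := (hI.comp_add_right r₀).comp_mul_left (c := r₁ - r₀)
    have e0 : (r₀ - r₀) / (r₁ - r₀) = 0 := by rw [sub_self, zero_div]
    have e1 : (r₁ - r₀) / (r₁ - r₀) = 1 := div_self hc
    rw [e0, e1] at h1
    exact h1
  have hcompOn : IntegrableOn (fun s => |f ((r₁ - r₀) * s + r₀)|) (Ioo 0 1) volume :=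
    (hcomp.1).mono_set Ioo_subset_Ioc_self
  have hrw : ∀ s : ℝ, (1 - s) * r₀ + s * r₁ = (r₁ - r₀) * s + r₀ := fun s => by ring
  simp_rw [hrw]
  calc |∫ s in Ioo (0:ℝ) 1, f ((r₁ - r₀) * s + r₀) * green s t|
      ≤ ∫ s in Ioo (0:ℝ) 1, |f ((r₁ - r₀) * s + r₀)| * |green s t| := by
        simpa [Real.norm_eq_abs, abs_mul] using
          norm_integral_le_integral_norm (μ := volume.restrict (Ioo 0 1))
            (f := fun s => f ((r₁ - r₀) * s + r₀) * green s t)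
    _ ≤ ∫ s in Ioo (0:ℝ) 1, |f ((r₁ - r₀) * s + r₀)| * (t * (1 - t)) := by
        apply integral_mono_of_nonneg
        · exact Filter.Eventually.of_forall fun s => by positivity
        · exact hcompOn.mul_const _
        · rw [Filter.EventuallyLE, ae_restrict_iff' measurableSet_Ioo]
          refine Filter.Eventually.of_forall fun s hs => ?_
          exact mul_le_mul_of_nonneg_left (green_abs_le ⟨hs.1.le, hs.2.le⟩ ht) (abs_nonneg _)
    _ = (t * (1 - t)) * ∫ s in Ioo (0:ℝ) 1, |f ((r₁ - r₀) * s + r₀)| := by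
        rw [integral_mul_const, mul_comm]
    _ = (t * (1 - t)) * ((r₁ - r₀)⁻¹ * ∫ y in r₀..r₁, |f y|) := by
        congr 1
        rw [← integral_Ioc_eq_integral_Ioo, ← intervalIntegral.integral_of_le zero_le_one]
        have := intervalIntegral.integral_comp_mul_add (a := (0:ℝ)) (b := 1)
          (fun y => |f y|) hc r₀
        simpa using this
    _ ≤ (t * (1 - t)) * ((r₁ - r₀)⁻¹ * ∫ y in a'..b', |f y|) := by
        apply mul_le_mul_of_nonneg_left _ (by obtain ⟨h0, h1⟩ := ht; nlinarith)
        apply mul_le_mul_of_nonneg_left _ (by positivity)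
        exact intervalIntegral.integral_mono_interval ha hr.le hb
          (Filter.Eventually.of_forall fun y => abs_nonneg _) hK
    _ = (∫ y in a'..b', |f y|) * (t * (1 - t)) / (r₁ - r₀) := by
        field_simp

lemma dense_sub (D : Submodule ℚ ℝ) (hD : D ≠ ⊥) (c d : ℝ) (h : c < d) :
    ∃ r ∈ (D : Set ℝ), c < r ∧ r < d := by
  obtain ⟨x, hxD, hx0⟩ := Submodule.exists_mem_ne_zero_of_ne_bot hD
  wlog hx : 0 < x generalizing x
  · refine this (-x) (by simpa using D.neg_mem hxD) (by simpa using hx0) ?_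
    push_neg at hx
    rcases hx.lt_or_eq with h' | h'
    · linarith
    · exact absurd h' hx0
  have hcd : c / x < d / x := by
    exact div_lt_div_of_pos_right h hx
  obtain ⟨q, hq1, hq2⟩ := exists_rat_btwn hcd
  refine ⟨q • x, D.smul_mem q hxD, ?_, ?_⟩
  · have := (div_lt_iff₀ hx).mp hq1
    simpa [Rat.smul_def] using this
  · have := (lt_div_iff₀ hx).mp hq2
    simpa [Rat.smul_def] using this

/-- Let `𝔇 ⊂ ℝ` be a nontrivial `ℚ`-vector subspace, and let `u` satisfy, for
some `f ∈ L¹_loc(0,1)`, the weighted convexity inequality on `(0,1) ∩ 𝔇`.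
Then `u` is locally Lipschitz on `(0,1) ∩ 𝔇`. -/
theorem stmt3 (D : Submodule ℚ ℝ) (hD : D ≠ ⊥) (u f : ℝ → ℝ)
    (hf : LocallyIntegrableOn f (Ioo 0 1))
    (hconv : ∀ r₀ ∈ Ioo (0:ℝ) 1 ∩ (D : Set ℝ), ∀ r₁ ∈ Ioo (0:ℝ) 1 ∩ (D : Set ℝ),
      r₀ ≤ r₁ → ∀ t ∈ Icc (0:ℝ) 1, (1 - t) * r₀ + t * r₁ ∈ (D : Set ℝ) →
        u ((1 - t) * r₀ + t * r₁) ≤ (1 - t) * u r₀ + t * u r₁ -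
          (r₁ - r₀) ^ 2 * ∫ s in Ioo (0:ℝ) 1, f ((1 - s) * r₀ + s * r₁) * green s t) :
    ∀ a b : ℝ, 0 < a → a ≤ b → b < 1 →
      ∃ C : ℝ, 0 ≤ C ∧ ∀ x ∈ Ioo a b ∩ (D : Set ℝ), ∀ y ∈ Ioo a b ∩ (D : Set ℝ),
        |u x - u y| ≤ C * |x - y| := by
  intro a b ha hab hb1
  set a' : ℝ := a / 2 with ha'def
  set b' : ℝ := (b + 1) / 2 with hb'def
  have ha'0 : 0 < a' := by positivity
  have ha'a : a' < a := by rw [ha'def]; linarith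
  have hbb' : b < b' := by rw [hb'def]; linarith
  have hb'1 : b' < 1 := by rw [hb'def]; linarith
  have ha'b' : a' ≤ b' := by linarith
  have hfi : IntegrableOn f (Icc a' b') volume :=
    hf.integrableOn_compact_subset (Icc_subset_Ioo ha'0 hb'1) isCompact_Icc
  have hK : IntervalIntegrable (fun y => |f y|) volume a' b' := by
    rw [intervalIntegrable_iff_integrableOn_Icc_of_le ha'b']
    have := hfi.norm; simp only [Real.norm_eq_abs] at this; exact this
  set K : ℝ := ∫ y in a'..b', |f y| with hKdef
  have hK0 : 0 ≤ K :=
    intervalIntegral.integral_nonneg ha'b' fun y _ => abs_nonneg _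
  -- key three-point inequality
  have key : ∀ p x y : ℝ, p ∈ (D : Set ℝ) → x ∈ (D : Set ℝ) → y ∈ (D : Set ℝ) →
      a' < p → p < x → x < y → y < b' →
      (u x - u p) * (y - x) ≤ (u y - u x) * (x - p) + K * ((x - p) * (y - x)) := by
    intro p x y hpD hxD hyD hap hpx hxy hyb
    have hpy : p < y := hpx.trans hxy
    have hyp : (0:ℝ) < y - p := by linarith
    set t : ℝ := (x - p) / (y - p) with htdef
    have ht0 : 0 ≤ t := div_nonneg (by linarith) (by linarith)
    have ht1 : t ≤ 1 := by rw [htdef, div_le_one hyp]; linarith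
    have hx : (1 - t) * p + t * y = x := by
      rw [htdef]; field_simp; ring
    have h1 := hconv p ⟨⟨by linarith, by linarith⟩, hpD⟩ y ⟨⟨by linarith, by linarith⟩, hyD⟩
      hpy.le t ⟨ht0, ht1⟩ (by rw [hx]; exact hxD)
    rw [hx] at h1
    have h2 := int_bound f a' b' p y t hK (by linarith) (by linarith) hpy ⟨ht0, ht1⟩
    rw [← hKdef] at h2
    -- -(y-p)^2 * I ≤ (y-p)^2 * |I| ≤ (y-p)^2 * (K * (t*(1-t)) / (y-p))
    set I : ℝ := ∫ s in Ioo (0:ℝ) 1, f ((1 - s) * p + s * y) * green s t with hIdef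
    have h3 : u x ≤ (1 - t) * u p + t * u y + (y - p) ^ 2 * (K * (t * (1 - t)) / (y - p)) := by
      have hb1 : -((y - p) ^ 2 * I) ≤ (y - p) ^ 2 * (K * (t * (1 - t)) / (y - p)) := by
        have : -I ≤ |I| := neg_le_abs I
        nlinarith [sq_nonneg (y - p), abs_nonneg I]
      linarith
    have e1 : (y - p) * ((1 - t) * u p + t * u y + (y - p) ^ 2 * (K * (t * (1 - t)) / (y - p)))
        = (y - x) * u p + (x - p) * u y + K * ((x - p) * (y - x)) := by
      rw [htdef]; field_simp; ring
    have h4 := mul_le_mul_of_nonneg_left h3 hyp.le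
    rw [e1] at h4
    nlinarith [h4]
  -- slope inequality
  have slope : ∀ p x y : ℝ, p ∈ (D : Set ℝ) → x ∈ (D : Set ℝ) → y ∈ (D : Set ℝ) →
      a' < p → p < x → x < y → y < b' →
      (u x - u p) / (x - p) ≤ (u y - u x) / (y - x) + K := by
    intro p x y hpD hxD hyD hap hpx hxy hyb
    have h1 : (0:ℝ) < x - p := by linarith
    have h2 : (0:ℝ) < y - x := by linarith
    have k := key p x y hpD hxD hyD hap hpx hxy hyb
    calc (u x - u p) / (x - p)
        ≤ ((u y - u x) * (x - p) + K * ((x - p) * (y - x))) / ((x - p) * (y - x)) := by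
          rw [div_le_div_iff₀ h1 (mul_pos h1 h2)]
          nlinarith [mul_le_mul_of_nonneg_right k h1.le]
      _ = (u y - u x) / (y - x) + K := by field_simp
  -- pick auxiliary points
  obtain ⟨p₁, hp₁D, hp₁l, hp₁r⟩ := dense_sub D hD a' a ha'a
  obtain ⟨p₂, hp₂D, hp₂l, hp₂r⟩ := dense_sub D hD p₁ a hp₁r
  obtain ⟨q₁, hq₁D, hq₁l, hq₁r⟩ := dense_sub D hD b b' hbb'
  obtain ⟨q₂, hq₂D, hq₂l, hq₂r⟩ := dense_sub D hD q₁ b' hq₁r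
  set C : ℝ := |(u p₂ - u p₁) / (p₂ - p₁)| + |(u q₂ - u q₁) / (q₂ - q₁)| + 2 * K with hCdef
  have hC0 : 0 ≤ C := by
    have h1 := abs_nonneg ((u p₂ - u p₁) / (p₂ - p₁))
    have h2 := abs_nonneg ((u q₂ - u q₁) / (q₂ - q₁))
    rw [hCdef]; linarith
  refine ⟨C, hC0, ?_⟩
  have main : ∀ x ∈ Ioo a b ∩ (D : Set ℝ), ∀ y ∈ Ioo a b ∩ (D : Set ℝ), x < y →
      |u x - u y| ≤ C * |x - y| := by
    rintro x ⟨⟨hax, hxb⟩, hxD⟩ y ⟨⟨hay, hyb⟩, hyD⟩ hxy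
    have h2 : (0:ℝ) < y - x := by linarith
    have s1 := slope p₂ x y hp₂D hxD hyD (by linarith) (by linarith) hxy (by linarith)
    have s2 := slope p₁ p₂ x hp₁D hp₂D hxD hp₁l hp₂l (by linarith) (by linarith)
    have s3 := slope x y q₁ hxD hyD hq₁D (by linarith) hxy (by linarith) (by linarith)
    have s4 := slope y q₁ q₂ hyD hq₁D hq₂D (by linarith) (by linarith) (by linarith)
      (by linarith)
    have hub : (u y - u x) / (y - x) ≤ C := by
      have h5 := le_abs_self ((u q₂ - u q₁) / (q₂ - q₁))
      have h6 := abs_nonneg ((u p₂ - u p₁) / (p₂ - p₁))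
      rw [hCdef]; linarith
    have hlb : -C ≤ (u y - u x) / (y - x) := by
      have h5 := neg_abs_le ((u p₂ - u p₁) / (p₂ - p₁))
      have h6 := abs_nonneg ((u q₂ - u q₁) / (q₂ - q₁))
      rw [hCdef]; linarith
    rw [abs_sub_comm (u x) (u y), abs_sub_comm x y, abs_of_pos h2]
    refine abs_le.mpr ⟨?_, ?_⟩
    · have := (le_div_iff₀ h2).mp hlb
      linarith
    · have := (div_le_iff₀ h2).mp hub
      linarith
  rintro x hx y hy
  rcases lt_trichotomy x y with h | h | h
  · exact main x hx y hy h
  · simp [h]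
  · rw [abs_sub_comm (u x), abs_sub_comm x]
    exact main y hy x hx h
end

section
/- Let 𝔇 ⊂ ℝ be a ℚ-vector subspace with 𝔇 ≠ {0}, let κ ∈ ℝ, and let u : [0,1] ∩ 𝔇 → ℝ be locally bounded and satisfy u((1-t)r₀+tr₁) ≥ σ_κ^{(1-t)}(r₁-r₀) u(r₀) + σ_κ^{(t)}(r₁-r₀) u(r₁) for all r₀, r₁ ∈ [0,1] ∩ 𝔇 with κ(r₁-r₀)² < π² and t ∈ [0,1] with (1-t)r₀+tr₁ ∈ 𝔇. Then u is locally Lipschitz in (0,1): for every r ∈ (0,1) ∩ 𝔇 there exist ε, C > 0 with [r-ε, r+ε] ⊂ [0,1] and |u(x)-u(y)| ≤ C|x-y| for all x, y ∈ [r-ε, r+ε] ∩ 𝔇. -/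
open MeasureTheory Set

/-- The distortion coefficients `σ_κ^{(t)}(δ)` (finite cases, `κδ² < π²`). -/
noncomputable def sigmaDist (κ t δ : ℝ) : ℝ :=
  if κ * δ ^ 2 = 0 then t
  else if 0 < κ * δ ^ 2 then
    Real.sin (Real.sqrt (κ * δ ^ 2) * t) / Real.sin (Real.sqrt (κ * δ ^ 2))
  else
    Real.sinh (Real.sqrt (-(κ * δ ^ 2)) * t) / Real.sinh (Real.sqrt (-(κ * δ ^ 2)))

lemma sin_lip' (a b : ℝ) : |Real.sin a - Real.sin b| ≤ |a - b| := by
  rw [Real.sin_sub_sin]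
  have h1 : |Real.sin ((a - b) / 2)| ≤ |(a - b) / 2| := Real.abs_sin_le_abs
  have h2 : |Real.cos ((a + b) / 2)| ≤ 1 := Real.abs_cos_le_one _
  calc |2 * Real.sin ((a - b) / 2) * Real.cos ((a + b) / 2)|
      = 2 * |Real.sin ((a - b) / 2)| * |Real.cos ((a + b) / 2)| := by
        rw [abs_mul, abs_mul]; norm_num
    _ ≤ 2 * |(a - b) / 2| * 1 := by
        apply mul_le_mul _ h2 (abs_nonneg _) (by positivity)
        nlinarith [abs_nonneg ((a-b)/2)]
    _ = |a - b| := by rw [abs_div, abs_two]; ring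

lemma sinh_lip' {c a b : ℝ} (ha : a ∈ Set.Icc (-c) c) (hb : b ∈ Set.Icc (-c) c) :
    |Real.sinh a - Real.sinh b| ≤ Real.cosh c * |a - b| := by
  have := (convex_Icc (-c) c).norm_image_sub_le_of_norm_deriv_le
    (f := Real.sinh) (fun x _ => (Real.hasDerivAt_sinh x).differentiableAt)
    (fun x hx => by
      rw [Real.norm_eq_abs, Real.deriv_sinh, abs_of_pos (Real.cosh_pos x), ← Real.cosh_abs]
      exact Real.cosh_le_cosh.2 (by
        rw [abs_abs]
        calc |x| ≤ c := abs_le.2 ⟨hx.1, hx.2⟩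
        _ ≤ |c| := le_abs_self c))
    hb ha
  simpa [Real.norm_eq_abs] using this

lemma cosh_le_two' {x : ℝ} (hx : |x| ≤ 1) : Real.cosh x ≤ 2 := by
  rw [← Real.cosh_abs]
  calc Real.cosh |x| ≤ Real.cosh 1 := Real.cosh_le_cosh.2 (by simpa using hx)
    _ ≤ 2 := by
        rw [Real.cosh_eq]
        have h1 : Real.exp 1 < 2.7182818286 := Real.exp_one_lt_d9
        have h2 : Real.exp (-1) < 1 := Real.exp_lt_one_iff.2 (by norm_num)
        nlinarith

lemma sigma_bounds {κ δ : ℝ} (hδ : |κ * δ ^ 2| ≤ 1) {t : ℝ} (ht0 : 0 ≤ t) (ht1 : t ≤ 1) :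
    0 ≤ sigmaDist κ t δ ∧ sigmaDist κ t δ ≤ 2 * t ∧ sigmaDist κ t δ ≤ 1 ∧
      1 - sigmaDist κ t δ ≤ 2 * (1 - t) := by
  unfold sigmaDist
  split_ifs with h0 hpos
  · exact ⟨ht0, by linarith, ht1, by linarith⟩
  · -- spherical case
    have hc1 : κ * δ ^ 2 ≤ 1 := (le_abs_self _).trans hδ
    set ω := Real.sqrt (κ * δ ^ 2) with hωdef
    have hω0 : 0 < ω := Real.sqrt_pos.2 hpos
    have hω1 : ω ≤ 1 := by
      rw [hωdef, show (1:ℝ) = Real.sqrt 1 by simp]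
      exact Real.sqrt_le_sqrt hc1
    have hsinlb : 3 / 4 * ω ≤ Real.sin ω := by
      have := Real.sin_gt_sub_cube hω0
      nlinarith [sq_nonneg ω]
    have hsinpos : 0 < Real.sin ω := lt_of_lt_of_le (by positivity) hsinlb
    have hπ2 : (1:ℝ) ≤ Real.pi / 2 := by nlinarith [Real.pi_gt_three]
    have hsintle : Real.sin (ω * t) ≤ ω * t := Real.sin_le (by positivity)
    have hsinnn : 0 ≤ Real.sin (ω * t) :=
      Real.sin_nonneg_of_nonneg_of_le_pi (by positivity)
        (by nlinarith [Real.pi_gt_three])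
    have hmono : Real.sin (ω * t) ≤ Real.sin ω := by
      apply Real.strictMonoOn_sin.monotoneOn
      · constructor
        · nlinarith
        · nlinarith
      · constructor
        · nlinarith
        · nlinarith
      · nlinarith
    have hlip : Real.sin ω - Real.sin (ω * t) ≤ ω * (1 - t) := by
      have h := sin_lip' ω (ω * t)
      have h2 : |ω - ω * t| = ω * (1 - t) := by
        rw [abs_of_nonneg (by nlinarith)]; ring
      calc Real.sin ω - Real.sin (ω * t) ≤ |Real.sin ω - Real.sin (ω * t)| := le_abs_self _
        _ ≤ |ω - ω * t| := h
        _ = ω * (1 - t) := h2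
    refine ⟨div_nonneg hsinnn hsinpos.le, ?_, ?_, ?_⟩
    · rw [div_le_iff₀ hsinpos]; nlinarith
    · exact div_le_one_of_le₀ hmono hsinpos.le
    · have key : (Real.sin ω - Real.sin (ω * t)) / Real.sin ω ≤ 2 * (1 - t) := by
        rw [div_le_iff₀ hsinpos]; nlinarith
      have heq : 1 - Real.sin (ω * t) / Real.sin ω
          = (Real.sin ω - Real.sin (ω * t)) / Real.sin ω := by
        field_simp
      linarith [heq ▸ key]
  · -- hyperbolic case
    have hneg : κ * δ ^ 2 < 0 := lt_of_le_of_ne (not_lt.1 hpos) h0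
    have hc1 : -(κ * δ ^ 2) ≤ 1 := by
      have := neg_abs_le (κ * δ ^ 2); linarith [abs_le.1 hδ]
    set ω := Real.sqrt (-(κ * δ ^ 2)) with hωdef
    have hω0 : 0 < ω := Real.sqrt_pos.2 (by linarith)
    have hω1 : ω ≤ 1 := by
      rw [hωdef, show (1:ℝ) = Real.sqrt 1 by simp]
      exact Real.sqrt_le_sqrt hc1
    have hsh0 : 0 < Real.sinh ω := Real.sinh_pos_iff.2 hω0
    have hshself : ω ≤ Real.sinh ω := (Real.self_lt_sinh_iff.2 hω0).le
    have hcosh : Real.cosh ω ≤ 2 := cosh_le_two' (by rw [abs_of_pos hω0]; exact hω1)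
    have hshnn : 0 ≤ Real.sinh (ω * t) := Real.sinh_nonneg_iff.2 (by positivity)
    have hmono : Real.sinh (ω * t) ≤ Real.sinh ω := Real.sinh_le_sinh.2 (by nlinarith)
    have hub : Real.sinh (ω * t) ≤ Real.cosh ω * (ω * t) := by
      have h := sinh_lip' (c := ω) (a := ω * t) (b := 0)
        ⟨by nlinarith, by nlinarith⟩ ⟨by linarith, by linarith⟩
      rw [Real.sinh_zero, sub_zero, sub_zero] at h
      rw [abs_of_nonneg hshnn, abs_of_nonneg (by positivity)] at h
      exact h
    have hlip : Real.sinh ω - Real.sinh (ω * t) ≤ Real.cosh ω * (ω * (1 - t)) := by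
      have h := sinh_lip' (c := ω) (a := ω) (b := ω * t)
        ⟨by linarith, le_refl ω⟩ ⟨by nlinarith, by nlinarith⟩
      rw [abs_of_nonneg (by linarith [hmono]), abs_of_nonneg (by nlinarith)] at h
      calc Real.sinh ω - Real.sinh (ω * t) ≤ Real.cosh ω * (ω - ω * t) := h
        _ = Real.cosh ω * (ω * (1 - t)) := by ring
    refine ⟨div_nonneg hshnn hsh0.le, ?_, ?_, ?_⟩
    · rw [div_le_iff₀ hsh0]
      nlinarith [mul_le_mul_of_nonneg_right hcosh (mul_nonneg hω0.le ht0),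
        mul_le_mul_of_nonneg_left hshself ht0]
    · exact div_le_one_of_le₀ hmono hsh0.le
    · have key : (Real.sinh ω - Real.sinh (ω * t)) / Real.sinh ω ≤ 2 * (1 - t) := by
        rw [div_le_iff₀ hsh0]
        nlinarith [mul_le_mul_of_nonneg_right hcosh
            (mul_nonneg hω0.le (by linarith : (0:ℝ) ≤ 1 - t)),
          mul_le_mul_of_nonneg_left hshself (by linarith : (0:ℝ) ≤ 1 - t)]
      have heq : 1 - Real.sinh (ω * t) / Real.sinh ω
          = (Real.sinh ω - Real.sinh (ω * t)) / Real.sinh ω := by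
        field_simp
      linarith [heq ▸ key]

lemma chord_upper {κ ε M ux uy uz x y z : ℝ} (hε : 0 < ε) (hM0 : 0 ≤ M)
    (hzx : ε ≤ z - x) (hxy : x ≤ y) (hyz : y ≤ z)
    (hδ : |κ * (z - x) ^ 2| ≤ 1)
    (H : sigmaDist κ (1 - (y - x) / (z - x)) (z - x) * ux
        + sigmaDist κ ((y - x) / (z - x)) (z - x) * uz ≤ uy)
    (hux : |ux| ≤ M) (huz : |uz| ≤ M) :
    ux - uy ≤ 4 * (M + 1) / ε * (y - x) := by
  have hzxpos : 0 < z - x := lt_of_lt_of_le hε hzx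
  set t := (y - x) / (z - x) with htdef
  have ht0 : 0 ≤ t := div_nonneg (by linarith) hzxpos.le
  have ht1 : t ≤ 1 := div_le_one_of_le₀ (by linarith) hzxpos.le
  obtain ⟨hs2a, hs2b, -, -⟩ := sigma_bounds hδ ht0 ht1
  obtain ⟨-, -, hs1c, hs1d⟩ := sigma_bounds hδ
    (by linarith : (0:ℝ) ≤ 1 - t) (by linarith : 1 - t ≤ 1)
  set s1 := sigmaDist κ (1 - t) (z - x)
  set s2 := sigmaDist κ t (z - x)
  have hux' := abs_le.1 hux
  have huz' := abs_le.1 huz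
  have e1 : (1 - s1) * ux ≤ 2 * t * M := by
    nlinarith [mul_le_mul_of_nonneg_left hux'.2 (by linarith : (0:ℝ) ≤ 1 - s1),
      mul_le_mul_of_nonneg_right (by linarith : 1 - s1 ≤ 2 * t) hM0]
  have e2 : -(s2 * uz) ≤ 2 * t * M := by
    nlinarith [mul_le_mul_of_nonneg_left (by linarith [huz'.1] : -uz ≤ M) hs2a,
      mul_le_mul_of_nonneg_right hs2b hM0]
  have e3 : ux - uy ≤ 4 * M * t := by nlinarith [H, e1, e2]
  have htle : t ≤ (y - x) / ε := div_le_div_of_nonneg_left (by linarith) hε hzx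
  have h1 : 4 * M * t ≤ 4 * M * ((y - x) / ε) :=
    mul_le_mul_of_nonneg_left htle (by positivity)
  have h2 : 4 * M * ((y - x) / ε) ≤ 4 * (M + 1) * ((y - x) / ε) := by
    have : (0:ℝ) ≤ (y - x) / ε := div_nonneg (by linarith) hε.le
    nlinarith
  have h3 : 4 * (M + 1) * ((y - x) / ε) = 4 * (M + 1) / ε * (y - x) := by ring
  linarith

lemma chord_lower {κ ε M uw ux uy w x y : ℝ} (hε : 0 < ε) (hM0 : 0 ≤ M)
    (hyw : ε ≤ y - w) (hwx : w ≤ x) (hxy : x ≤ y)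
    (hδ : |κ * (y - w) ^ 2| ≤ 1)
    (H : sigmaDist κ (1 - (x - w) / (y - w)) (y - w) * uw
        + sigmaDist κ ((x - w) / (y - w)) (y - w) * uy ≤ ux)
    (huy : |uy| ≤ M) (huw : |uw| ≤ M) :
    uy - ux ≤ 4 * (M + 1) / ε * (y - x) := by
  have hywpos : 0 < y - w := lt_of_lt_of_le hε hyw
  set t := (x - w) / (y - w) with htdef
  have ht0 : 0 ≤ t := div_nonneg (by linarith) hywpos.le
  have ht1 : t ≤ 1 := div_le_one_of_le₀ (by linarith) hywpos.le
  obtain ⟨-, -, hs2c, hs2d⟩ := sigma_bounds hδ ht0 ht1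
  obtain ⟨hs1a, hs1b, -, -⟩ := sigma_bounds hδ
    (by linarith : (0:ℝ) ≤ 1 - t) (by linarith : 1 - t ≤ 1)
  set s1 := sigmaDist κ (1 - t) (y - w)
  set s2 := sigmaDist κ t (y - w)
  have huy' := abs_le.1 huy
  have huw' := abs_le.1 huw
  have e1 : (1 - s2) * uy ≤ 2 * (1 - t) * M := by
    nlinarith [mul_le_mul_of_nonneg_left huy'.2 (by linarith : (0:ℝ) ≤ 1 - s2),
      mul_le_mul_of_nonneg_right hs2d hM0]
  have e2 : -(s1 * uw) ≤ 2 * (1 - t) * M := by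
    nlinarith [mul_le_mul_of_nonneg_left (by linarith [huw'.1] : -uw ≤ M) hs1a,
      mul_le_mul_of_nonneg_right hs1b hM0]
  have e3 : uy - ux ≤ 4 * M * (1 - t) := by nlinarith [H, e1, e2]
  have h1t : 1 - t = (y - x) / (y - w) := by rw [htdef]; field_simp; ring
  have htle : 1 - t ≤ (y - x) / ε := by
    rw [h1t]; exact div_le_div_of_nonneg_left (by linarith) hε hyw
  have h1 : 4 * M * (1 - t) ≤ 4 * M * ((y - x) / ε) :=
    mul_le_mul_of_nonneg_left htle (by positivity)
  have h2 : 4 * M * ((y - x) / ε) ≤ 4 * (M + 1) * ((y - x) / ε) := by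
    have : (0:ℝ) ≤ (y - x) / ε := div_nonneg (by linarith) hε.le
    nlinarith
  have h3 : 4 * (M + 1) * ((y - x) / ε) = 4 * (M + 1) / ε * (y - x) := by ring
  linarith

set_option maxHeartbeats 1000000 in
/-- Let `𝔇 ⊂ ℝ` be a nontrivial `ℚ`-vector subspace, `κ ∈ ℝ` and let
`u : [0,1] ∩ 𝔇 → ℝ` be locally bounded and satisfy the distorted concavity
inequality.  Then `u` is locally Lipschitz in `(0,1) ∩ 𝔇`. -/
theorem stmt4 (D : Submodule ℚ ℝ) (hD : D ≠ ⊥) (κ : ℝ) (u : ℝ → ℝ)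
    (hlocbdd : ∀ r ∈ Icc (0:ℝ) 1, ∃ ε > (0:ℝ), ∃ M : ℝ,
      ∀ x ∈ Icc (r - ε) (r + ε) ∩ Icc (0:ℝ) 1 ∩ (D : Set ℝ), |u x| ≤ M)
    (hconc : ∀ r₀ ∈ Icc (0:ℝ) 1 ∩ (D : Set ℝ), ∀ r₁ ∈ Icc (0:ℝ) 1 ∩ (D : Set ℝ),
      κ * (r₁ - r₀) ^ 2 < Real.pi ^ 2 →
      ∀ t ∈ Icc (0:ℝ) 1, (1 - t) * r₀ + t * r₁ ∈ (D : Set ℝ) →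
        sigmaDist κ (1 - t) (r₁ - r₀) * u r₀ + sigmaDist κ t (r₁ - r₀) * u r₁ ≤
          u ((1 - t) * r₀ + t * r₁)) :
    ∀ r ∈ Ioo (0:ℝ) 1 ∩ (D : Set ℝ), ∃ ε > (0:ℝ), ∃ C > (0:ℝ),
      Icc (r - ε) (r + ε) ⊆ Icc (0:ℝ) 1 ∧
      ∀ x ∈ Icc (r - ε) (r + ε) ∩ (D : Set ℝ), ∀ y ∈ Icc (r - ε) (r + ε) ∩ (D : Set ℝ),
        |u x - u y| ≤ C * |x - y| := by
  obtain ⟨a₀, ha₀D, ha₀⟩ := Submodule.exists_mem_ne_zero_of_ne_bot hD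
  obtain ⟨a, haD, ha⟩ : ∃ a ∈ (D : Set ℝ), 0 < a := by
    rcases Ne.lt_or_gt ha₀ with h | h
    · exact ⟨-a₀, D.neg_mem ha₀D, by linarith⟩
    · exact ⟨a₀, ha₀D, h⟩
  have hqa : ∀ q : ℚ, (q : ℝ) * a ∈ (D : Set ℝ) := fun q => by
    simpa [Rat.smul_def] using D.smul_mem q haD
  have hpick : ∀ lo hi : ℝ, lo < hi → ∃ z ∈ (D : Set ℝ), lo < z ∧ z < hi := by
    intro lo hi h
    obtain ⟨q, hq1, hq2⟩ := exists_rat_btwn ((div_lt_div_iff_of_pos_right ha).2 h)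
    exact ⟨(q : ℝ) * a, hqa q, (div_lt_iff₀ ha).1 hq1, (lt_div_iff₀ ha).1 hq2⟩
  rintro r ⟨⟨hr0, hr1⟩, hrD⟩
  obtain ⟨ε₀, hε₀, M, hM⟩ := hlocbdd r ⟨hr0.le, hr1.le⟩
  have hM0 : 0 ≤ M :=
    (abs_nonneg _).trans (hM r ⟨⟨⟨by linarith, by linarith⟩, ⟨hr0.le, hr1.le⟩⟩, hrD⟩)
  set s := Real.sqrt (|κ| + 1) with hsdef
  have hsnn : 0 ≤ s := Real.sqrt_nonneg _
  have hss : s ^ 2 = |κ| + 1 := Real.sq_sqrt (by positivity)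
  have hs1 : 1 ≤ s := by nlinarith [abs_nonneg κ, sq_nonneg (s - 1)]
  set ε := min (min ε₀ (min r (1 - r)) / 4) (1 / (4 * s)) with hεdef
  have hεpos : 0 < ε := by
    apply lt_min
    · have : 0 < min ε₀ (min r (1 - r)) := lt_min hε₀ (lt_min hr0 (by linarith))
      linarith
    · positivity
  have hεa : ε ≤ ε₀ / 4 := by
    refine (min_le_left _ _).trans ?_
    have := min_le_left ε₀ (min r (1 - r)); linarith
  have hεb : ε ≤ r / 4 := by
    refine (min_le_left _ _).trans ?_
    have h1 := min_le_right ε₀ (min r (1 - r))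
    have h2 := min_le_left r (1 - r); linarith
  have hεc : ε ≤ (1 - r) / 4 := by
    refine (min_le_left _ _).trans ?_
    have h1 := min_le_right ε₀ (min r (1 - r))
    have h2 := min_le_right r (1 - r); linarith
  have hεd : ε ≤ 1 / (4 * s) := min_le_right _ _
  have h4s : 4 * ε * s ≤ 1 := by
    have : ε * (4 * s) ≤ 1 := (le_div_iff₀ (by positivity)).1 hεd
    linarith
  have hκε : |κ| * (4 * ε) ^ 2 ≤ 1 := by
    nlinarith [h4s, hss, hs1, hεpos.le, abs_nonneg κ, sq_nonneg (4 * ε),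
      mul_nonneg (mul_nonneg (by norm_num : (0:ℝ) ≤ 4) hεpos.le) hsnn]
  clear hεd h4s hsdef hεdef
  have hbdd : ∀ w, r - 3 * ε ≤ w → w ≤ r + 3 * ε → w ∈ (D : Set ℝ) → |u w| ≤ M := by
    intro w h1 h2 hwD
    exact hM w ⟨⟨⟨by linarith, by linarith⟩, ⟨by linarith, by linarith⟩⟩, hwD⟩
  obtain ⟨z, hzD, hz1, hz2⟩ := hpick (r + 2 * ε) (r + 3 * ε) (by linarith)
  obtain ⟨w, hwD, hw1, hw2⟩ := hpick (r - 3 * ε) (r - 2 * ε) (by linarith)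
  have hπ : (1 : ℝ) < Real.pi ^ 2 := by nlinarith [Real.pi_gt_three]
  have hC : (0:ℝ) < 4 * (M + 1) / ε := by positivity
  refine ⟨ε, hεpos, 4 * (M + 1) / ε, hC,
    fun p hp => ⟨by linarith [hp.1, hεb], by linarith [hp.2, hεc]⟩, ?_⟩
  have key : ∀ x, r - ε ≤ x → x ≤ r + ε → x ∈ (D : Set ℝ) →
      ∀ y, r - ε ≤ y → y ≤ r + ε → y ∈ (D : Set ℝ) → x ≤ y →
      u x - u y ≤ 4 * (M + 1) / ε * (y - x) ∧
        u y - u x ≤ 4 * (M + 1) / ε * (y - x) := by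
    intro x hx1 hx2 hxD y hy1 hy2 hyD hxy
    constructor
    · -- upper chord through z
      have hzx : ε ≤ z - x := by linarith
      have hzx4 : z - x ≤ 4 * ε := by linarith
      have hzxpos : 0 < z - x := lt_of_lt_of_le hεpos hzx
      have hδabs : |κ * (z - x) ^ 2| ≤ 1 := by
        rw [abs_mul, abs_of_nonneg (sq_nonneg (z - x))]
        have hsq : (z - x) ^ 2 ≤ (4 * ε) ^ 2 := by nlinarith
        calc |κ| * (z - x) ^ 2 ≤ |κ| * (4 * ε) ^ 2 :=
              mul_le_mul_of_nonneg_left hsq (abs_nonneg κ)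
          _ ≤ 1 := hκε
      have hκπ : κ * (z - x) ^ 2 < Real.pi ^ 2 :=
        lt_of_le_of_lt ((le_abs_self _).trans hδabs) hπ
      have ht0 : 0 ≤ (y - x) / (z - x) := div_nonneg (by linarith) hzxpos.le
      have ht1 : (y - x) / (z - x) ≤ 1 := div_le_one_of_le₀ (by linarith) hzxpos.le
      have hcomb : (1 - (y - x) / (z - x)) * x + (y - x) / (z - x) * z = y := by
        have htmul : (y - x) / (z - x) * (z - x) = y - x :=
          div_mul_cancel₀ _ hzxpos.ne'
        linear_combination htmul
      have H := hconc x ⟨⟨by linarith, by linarith⟩, hxD⟩ z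
        ⟨⟨by linarith, by linarith⟩, hzD⟩ hκπ ((y - x) / (z - x)) ⟨ht0, ht1⟩
        (by rw [hcomb]; exact hyD)
      rw [hcomb] at H
      exact chord_upper hεpos hM0 hzx hxy (by linarith) hδabs H
        (hbdd x (by linarith) (by linarith) hxD)
        (hbdd z (by linarith) (by linarith) hzD)
    · -- lower chord through w
      have hyw : ε ≤ y - w := by linarith
      have hyw4 : y - w ≤ 4 * ε := by linarith
      have hywpos : 0 < y - w := lt_of_lt_of_le hεpos hyw
      have hδabs : |κ * (y - w) ^ 2| ≤ 1 := by
        rw [abs_mul, abs_of_nonneg (sq_nonneg (y - w))]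
        have hsq : (y - w) ^ 2 ≤ (4 * ε) ^ 2 := by nlinarith
        calc |κ| * (y - w) ^ 2 ≤ |κ| * (4 * ε) ^ 2 :=
              mul_le_mul_of_nonneg_left hsq (abs_nonneg κ)
          _ ≤ 1 := hκε
      have hκπ : κ * (y - w) ^ 2 < Real.pi ^ 2 :=
        lt_of_le_of_lt ((le_abs_self _).trans hδabs) hπ
      have ht0 : 0 ≤ (x - w) / (y - w) := div_nonneg (by linarith) hywpos.le
      have ht1 : (x - w) / (y - w) ≤ 1 := div_le_one_of_le₀ (by linarith) hywpos.le
      have hcomb : (1 - (x - w) / (y - w)) * w + (x - w) / (y - w) * y = x := by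
        have htmul : (x - w) / (y - w) * (y - w) = x - w :=
          div_mul_cancel₀ _ hywpos.ne'
        linear_combination htmul
      have H := hconc w ⟨⟨by linarith, by linarith⟩, hwD⟩ y
        ⟨⟨by linarith, by linarith⟩, hyD⟩ hκπ ((x - w) / (y - w)) ⟨ht0, ht1⟩
        (by rw [hcomb]; exact hxD)
      rw [hcomb] at H
      exact chord_lower hεpos hM0 hyw (by linarith) hxy hδabs H
        (hbdd y (by linarith) (by linarith) hyD)
        (hbdd w (by linarith) (by linarith) hwD)
  rintro x ⟨⟨hx1, hx2⟩, hxD⟩ y ⟨⟨hy1, hy2⟩, hyD⟩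
  rcases le_total x y with h | h
  · have hk := key x hx1 hx2 hxD y hy1 hy2 hyD h
    have habs : |x - y| = y - x := by rw [abs_sub_comm, abs_of_nonneg (by linarith)]
    rw [habs, abs_sub_le_iff]
    exact ⟨hk.1, hk.2⟩
  · have hk := key y hy1 hy2 hyD x hx1 hx2 hxD h
    have habs : |x - y| = x - y := abs_of_nonneg (by linarith)
    rw [habs, abs_sub_le_iff]
    exact ⟨hk.2, hk.1⟩
end

section
/- Let U : [0,∞) → ℝ be continuous and convex with U(0) = 0 and U' locally Lipschitz on (0,∞), and define P(r) := r U'(r) − U(r). Then U belongs to McCann's class DC(N) for N ∈ [1,∞] (i.e., P(0) = lim_{r↓0} P(r) = 0 and r P'(r) − P(r) ≥ −(1/N)P(r) for a.e. r > 0) if and only if the function V : (0,∞) → ℝ defined by V(r) := r^N U(r^{−N}) is convex and nonincreasing (for N < ∞). -/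
open MeasureTheory Set Filter Real Topology intervalIntegral


def LocLip (f : ℝ → ℝ) : Prop :=
  ∀ x ∈ Ioi (0:ℝ), ∃ ε > (0:ℝ), ∃ K : NNReal, LipschitzOnWith K f (Metric.ball x ε ∩ Ioi 0)

lemma lipschitzOnWith_of_le {f : ℝ → ℝ} {s : Set ℝ} {C : ℝ} (hC : 0 ≤ C)
    (h : ∀ x ∈ s, ∀ y ∈ s, |f x - f y| ≤ C * |x - y|) :
    LipschitzOnWith C.toNNReal f s := by
  rw [lipschitzOnWith_iff_dist_le_mul]
  intro x hx y hy
  rw [Real.dist_eq, Real.dist_eq, Real.coe_toNNReal C hC]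
  exact h x hx y hy

lemma abs_le_of_lipschitzOnWith {f : ℝ → ℝ} {s : Set ℝ} {K : NNReal}
    (hf : LipschitzOnWith K f s) {x y : ℝ} (hx : x ∈ s) (hy : y ∈ s) :
    |f x - f y| ≤ (K : ℝ) * |x - y| := by
  have := (lipschitzOnWith_iff_dist_le_mul.1 hf) x hx y hy
  rwa [Real.dist_eq] at this

lemma LocLip.mono {f : ℝ → ℝ} (hf : LocLip f) {x ε' : ℝ} (hx : x ∈ Ioi (0:ℝ)) (hε' : 0 < ε') :
    ∃ ε > (0:ℝ), ε ≤ ε' ∧ ∃ K : NNReal, LipschitzOnWith K f (Metric.ball x ε ∩ Ioi 0) := by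
  obtain ⟨ε, hε, K, hK⟩ := hf x hx
  exact ⟨min ε ε', lt_min hε hε', min_le_right _ _,
    K, hK.mono (inter_subset_inter_left _ (Metric.ball_subset_ball (min_le_left _ _)))⟩

lemma LocLip.mul {f g : ℝ → ℝ} (hf : LocLip f) (hg : LocLip g) :
    LocLip (fun y => f y * g y) := by
  intro x hx
  obtain ⟨ε₁, hε₁, K₁, hK₁⟩ := hf x hx
  obtain ⟨ε₂, hε₂, K₂, hK₂⟩ := hg x hx
  set ε := min ε₁ ε₂ with hεdef
  have hε : 0 < ε := lt_min hε₁ hε₂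
  set s := Metric.ball x ε ∩ Ioi (0:ℝ) with hsdef
  have hs₁ : s ⊆ Metric.ball x ε₁ ∩ Ioi 0 :=
    inter_subset_inter_left _ (Metric.ball_subset_ball (min_le_left _ _))
  have hs₂ : s ⊆ Metric.ball x ε₂ ∩ Ioi 0 :=
    inter_subset_inter_left _ (Metric.ball_subset_ball (min_le_right _ _))
  have hxs : x ∈ s := ⟨Metric.mem_ball_self hε, hx⟩
  set Mf := |f x| + (K₁ : ℝ) * ε with hMf
  set Mg := |g x| + (K₂ : ℝ) * ε with hMg
  have hMf0 : 0 ≤ Mf := by positivity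
  have hMg0 : 0 ≤ Mg := by positivity
  have hbf : ∀ y ∈ s, |f y| ≤ Mf := by
    intro y hy
    have h1 := abs_le_of_lipschitzOnWith hK₁ (hs₁ hy) (hs₁ hxs)
    have h2 : |y - x| ≤ ε := by
      have := hy.1; rw [Metric.mem_ball, Real.dist_eq] at this; linarith
    have h3 : (K₁:ℝ) * |y - x| ≤ (K₁:ℝ) * ε := by
      apply mul_le_mul_of_nonneg_left h2 K₁.coe_nonneg
    calc |f y| ≤ |f y - f x| + |f x| := by
          have := abs_add_le (f y - f x) (f x); simpa using this
    _ ≤ (K₁:ℝ) * ε + |f x| := by linarith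
    _ = Mf := by rw [hMf]; ring
  have hbg : ∀ y ∈ s, |g y| ≤ Mg := by
    intro y hy
    have h1 := abs_le_of_lipschitzOnWith hK₂ (hs₂ hy) (hs₂ hxs)
    have h2 : |y - x| ≤ ε := by
      have := hy.1; rw [Metric.mem_ball, Real.dist_eq] at this; linarith
    have h3 : (K₂:ℝ) * |y - x| ≤ (K₂:ℝ) * ε := by
      apply mul_le_mul_of_nonneg_left h2 K₂.coe_nonneg
    calc |g y| ≤ |g y - g x| + |g x| := by
          have := abs_add_le (g y - g x) (g x); simpa using this
    _ ≤ (K₂:ℝ) * ε + |g x| := by linarith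
    _ = Mg := by rw [hMg]; ring
  refine ⟨ε, hε, (Mf * (K₂:ℝ) + Mg * (K₁:ℝ)).toNNReal, ?_⟩
  refine lipschitzOnWith_of_le (by positivity) ?_
  intro y hy z hz
  have h1 : |f y * g y - f z * g z| ≤ |f y| * |g y - g z| + |g z| * |f y - f z| := by
    calc |f y * g y - f z * g z| = |f y * (g y - g z) + g z * (f y - f z)| := by ring_nf
    _ ≤ |f y * (g y - g z)| + |g z * (f y - f z)| := abs_add_le _ _
    _ = |f y| * |g y - g z| + |g z| * |f y - f z| := by rw [abs_mul, abs_mul]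
  have h2 := abs_le_of_lipschitzOnWith hK₂ (hs₂ hy) (hs₂ hz)
  have h3 := abs_le_of_lipschitzOnWith hK₁ (hs₁ hy) (hs₁ hz)
  have h4 := hbf y hy
  have h5 := hbg z hz
  have h6 : |f y| * |g y - g z| ≤ Mf * ((K₂:ℝ) * |y - z|) := by
    apply mul_le_mul h4 h2 (abs_nonneg _) hMf0
  have h7 : |g z| * |f y - f z| ≤ Mg * ((K₁:ℝ) * |y - z|) := by
    apply mul_le_mul h5 h3 (abs_nonneg _) hMg0
  calc |f y * g y - f z * g z| ≤ Mf * ((K₂:ℝ) * |y - z|) + Mg * ((K₁:ℝ) * |y - z|) := by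
        linarith
  _ = (Mf * (K₂:ℝ) + Mg * (K₁:ℝ)) * |y - z| := by ring

lemma LocLip.sub {f g : ℝ → ℝ} (hf : LocLip f) (hg : LocLip g) :
    LocLip (fun y => f y - g y) := by
  intro x hx
  obtain ⟨ε₁, hε₁, K₁, hK₁⟩ := hf x hx
  obtain ⟨ε₂, hε₂, K₂, hK₂⟩ := hg x hx
  set ε := min ε₁ ε₂ with hεdef
  have hε : 0 < ε := lt_min hε₁ hε₂
  have hs₁ : Metric.ball x ε ∩ Ioi 0 ⊆ Metric.ball x ε₁ ∩ Ioi 0 :=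
    inter_subset_inter_left _ (Metric.ball_subset_ball (min_le_left _ _))
  have hs₂ : Metric.ball x ε ∩ Ioi 0 ⊆ Metric.ball x ε₂ ∩ Ioi 0 :=
    inter_subset_inter_left _ (Metric.ball_subset_ball (min_le_right _ _))
  refine ⟨ε, hε, ((K₁:ℝ) + (K₂:ℝ)).toNNReal, lipschitzOnWith_of_le (by positivity) ?_⟩
  intro y hy z hz
  have h2 := abs_le_of_lipschitzOnWith hK₂ (hs₂ hy) (hs₂ hz)
  have h3 := abs_le_of_lipschitzOnWith hK₁ (hs₁ hy) (hs₁ hz)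
  calc |f y - g y - (f z - g z)| = |(f y - f z) + -(g y - g z)| := by ring_nf
  _ ≤ |f y - f z| + |-(g y - g z)| := abs_add_le _ _
  _ = |f y - f z| + |g y - g z| := by rw [abs_neg]
  _ ≤ ((K₁:ℝ) + (K₂:ℝ)) * |y - z| := by linarith

lemma locLip_id : LocLip (fun y => y) := by
  intro x hx
  exact ⟨1, one_pos, 1, by
    refine lipschitzOnWith_iff_dist_le_mul.2 fun y _ z _ => ?_
    simp⟩

lemma locLip_rpow {c : ℝ} (hc : c - 1 ≤ 0) : LocLip (fun y => y ^ c) := by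
  intro x hx
  have hx0 : (0:ℝ) < x := hx
  set M := |c| * (x/2) ^ (c-1) with hM
  have hM0 : 0 ≤ M := by positivity
  refine ⟨x/2, by linarith, M.toNNReal, ?_⟩
  have hconv : Convex ℝ (Metric.ball x (x/2) ∩ Ioi (0:ℝ)) :=
    (convex_ball _ _).inter (convex_Ioi _)
  have := hconv.lipschitzOnWith_of_nnnorm_hasDerivWithin_le (C := M.toNNReal)
    (f := fun y => y ^ c) (f' := fun y => c * y ^ (c-1)) ?_ ?_
  · exact this
  · intro y hy
    have hy0 : 0 < y := hy.2
    exact (Real.hasDerivAt_rpow_const (Or.inl hy0.ne')).hasDerivWithinAt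
  · intro y hy
    have hy0 : 0 < y := hy.2
    have hyx : x/2 ≤ y := by
      have := hy.1; rw [Metric.mem_ball, Real.dist_eq, abs_sub_lt_iff] at this
      linarith [this.2]
    have h1 : y ^ (c-1) ≤ (x/2) ^ (c-1) :=
      Real.rpow_le_rpow_of_nonpos (by linarith) hyx hc
    have h2 : |c * y ^ (c-1)| ≤ M := by
      rw [abs_mul, hM]
      apply mul_le_mul_of_nonneg_left _ (abs_nonneg c)
      rw [abs_of_nonneg (Real.rpow_nonneg hy0.le _)]
      exact h1
    have h3 : ‖c * y ^ (c-1)‖₊ = (|c * y ^ (c-1)|).toNNReal := by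
      rw [Real.toNNReal_abs]; rfl
    rw [h3]
    exact Real.toNNReal_le_toNNReal h2

lemma lipschitzWith_clamp {f : ℝ → ℝ} {K : NNReal} {s : Set ℝ} {a b : ℝ} (hab : a ≤ b)
    (hsub : Icc a b ⊆ s) (hf : LipschitzOnWith K f s) :
    LipschitzWith K (fun x => f (max a (min x b))) := by
  have hclamp : LipschitzWith 1 (fun x : ℝ => max a (min x b)) := by
    simpa using (LipschitzWith.min_const (LipschitzWith.id (α := ℝ)) b).const_max a
  have hmem : ∀ z : ℝ, max a (min z b) ∈ s := fun z =>
    hsub ⟨le_max_left _ _, max_le hab (min_le_right _ _)⟩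
  have h2 : LipschitzOnWith (K * 1) (f ∘ fun x : ℝ => max a (min x b)) univ :=
    hf.comp ((lipschitzOnWith_univ).2 hclamp) (fun z _ => hmem z)
  rw [mul_one, lipschitzOnWith_univ] at h2
  exact h2

lemma abs_deriv_le_of_lipschitz {f : ℝ → ℝ} {K : NNReal} (hf : LipschitzWith K f) (x : ℝ) :
    |deriv f x| ≤ K := by
  by_cases hd : DifferentiableAt ℝ f x
  · have h := hasDerivAt_iff_tendsto_slope.1 hd.hasDerivAt
    refine le_of_tendsto h.abs ?_
    filter_upwards [self_mem_nhdsWithin] with y hy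
    have hyx : y - x ≠ 0 := sub_ne_zero.2 hy
    rw [slope_def_field, abs_div, div_le_iff₀ (abs_pos.2 hyx)]
    have := hf.dist_le_mul y x
    rw [Real.dist_eq, Real.dist_eq] at this
    simpa [abs_sub_comm] using this
  · simp [deriv_zero_of_not_differentiableAt hd, K.coe_nonneg]


noncomputable def useq : ℕ → ℝ := fun n => ((n : ℝ) + 1)⁻¹

lemma useq_pos (n : ℕ) : 0 < useq n := by unfold useq; positivity

lemma useq_tendsto : Tendsto useq atTop (𝓝 0) := by
  unfold useq; simpa [useq, one_div] using tendsto_one_div_add_atTop_nhds_zero_nat (𝕜 := ℝ)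

lemma tendsto_slope_seq {f : ℝ → ℝ} {x d : ℝ} (hf : HasDerivAt f d x) :
    Tendsto (fun n => (f (x + useq n) - f x) / useq n) atTop (𝓝 d) := by
  have h := hasDerivAt_iff_tendsto_slope.1 hf
  have hu : Tendsto (fun n => x + useq n) atTop (𝓝[≠] x) := by
    apply tendsto_nhdsWithin_of_tendsto_nhds_of_eventually_within
    · simpa using tendsto_const_nhds.add useq_tendsto
    · exact Eventually.of_forall fun n => by
        simp only [mem_compl_iff, mem_singleton_iff]
        nlinarith [useq_pos n]
  have := h.comp hu
  convert this using 2 with n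
  simp [Function.comp, slope_def_field, add_sub_cancel_left]

lemma tendsto_integral_avg {f : ℝ → ℝ} (hf : Continuous f) (c : ℝ) :
    Tendsto (fun n => (∫ x in c..(c + useq n), f x) / useq n) atTop (𝓝 (f c)) := by
  have hF : HasDerivAt (fun t => ∫ x in c..t, f x) (f c) c :=
    integral_hasDerivAt_right (hf.intervalIntegrable _ _)
      (hf.stronglyMeasurableAtFilter _ _) hf.continuousAt
  have := tendsto_slope_seq hF
  simpa using this

lemma lipschitz_ftc {f : ℝ → ℝ} {K : NNReal} (hf : LipschitzWith K f) {a b : ℝ} (hab : a ≤ b) :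
    ∫ x in a..b, deriv f x = f b - f a := by
  have hcont : Continuous f := hf.continuous
  have hint : ∀ c d : ℝ, IntervalIntegrable f volume c d := fun c d => hcont.intervalIntegrable _ _
  -- the integrals of difference quotients
  have key : ∀ n, (∫ x in a..b, (f (x + useq n) - f x) / useq n) =
      (∫ x in b..(b + useq n), f x) / useq n - (∫ x in a..(a + useq n), f x) / useq n := by
    intro n
    have h1 : (∫ x in a..b, (f (x + useq n) - f x) / useq n) =
        ((∫ x in a..b, f (x + useq n)) - ∫ x in a..b, f x) / useq n := by
      rw [intervalIntegral.integral_div, integral_sub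
        (Continuous.intervalIntegrable (by continuity : Continuous fun x : ℝ => f (x + useq n)) _ _) (hint a b)]
    rw [h1, integral_comp_add_right]
    have h2 := integral_add_adjacent_intervals (hint a (a + useq n)) (hint (a + useq n) (b + useq n))
    have h3 := integral_add_adjacent_intervals (hint a b) (hint b (b + useq n))
    rw [div_sub_div_same]
    congr 1
    linarith
  -- dominated convergence
  have hmeas : ∀ n, AEStronglyMeasurable (fun x => (f (x + useq n) - f x) / useq n)
      (volume.restrict (Ioc a b)) :=
    fun n => ((hcont.comp (by continuity)).sub hcont).div_const _ |>.aestronglyMeasurable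
  have hbound : ∀ n, ∀ᵐ x ∂(volume.restrict (Ioc a b)),
      ‖(f (x + useq n) - f x) / useq n‖ ≤ (K : ℝ) := by
    intro n
    refine ae_of_all _ fun x => ?_
    rw [norm_div, Real.norm_eq_abs, Real.norm_eq_abs,
      abs_of_pos (useq_pos n), div_le_iff₀ (useq_pos n)]
    have := hf.dist_le_mul (x + useq n) x
    rw [Real.dist_eq, Real.dist_eq] at this
    simpa [abs_of_pos (useq_pos n)] using this
  have hlim : ∀ᵐ x ∂(volume.restrict (Ioc a b)),
      Tendsto (fun n => (f (x + useq n) - f x) / useq n) atTop (𝓝 (deriv f x)) := by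
    filter_upwards [ae_restrict_of_ae (hf.ae_differentiableAt (μ := volume))] with x hx
    exact tendsto_slope_seq hx.hasDerivAt
  have hdct := MeasureTheory.tendsto_integral_of_dominated_convergence (F := fun n x =>
      (f (x + useq n) - f x) / useq n) (f := deriv f) (bound := fun _ => (K : ℝ))
      hmeas (integrable_const _) hbound hlim
  -- identify both limits
  have heq : ∀ n, (∫ x in Ioc a b, (f (x + useq n) - f x) / useq n) =
      (∫ x in b..(b + useq n), f x) / useq n - (∫ x in a..(a + useq n), f x) / useq n := by
    intro n
    rw [← integral_of_le hab]
    exact key n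
  rw [show (∫ x in Ioc a b, deriv f x) = ∫ x in a..b, deriv f x from (integral_of_le hab).symm] at hdct
  have hlim2 : Tendsto (fun n => (∫ x in b..(b + useq n), f x) / useq n -
      (∫ x in a..(a + useq n), f x) / useq n) atTop (𝓝 (f b - f a)) :=
    (tendsto_integral_avg hcont b).sub (tendsto_integral_avg hcont a)
  refine tendsto_nhds_unique ?_ hlim2
  convert hdct using 2 with n
  exact (heq n).symm



lemma lipschitz_mono_of_ae {f : ℝ → ℝ} {K : NNReal} (hf : LipschitzWith K f)
    (h : ∀ᵐ x, 0 ≤ deriv f x) : Monotone f := by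
  intro a b hab
  have hftc := lipschitz_ftc hf hab
  have hpos : 0 ≤ ∫ x in a..b, deriv f x :=
    intervalIntegral.integral_nonneg_of_ae hab h
  linarith

lemma monotoneOn_Ioi_of_locally {g : ℝ → ℝ}
    (hloc : ∀ x ∈ Ioi (0:ℝ), ∃ δ > 0, 0 < x - δ ∧ MonotoneOn g (Icc (x - δ) (x + δ))) :
    MonotoneOn g (Ioi (0:ℝ)) := by
  intro a ha b hb hab
  rcases eq_or_lt_of_le hab with rfl | hab
  · exact le_refl _
  set S := {y | y ∈ Icc a b ∧ ∀ z ∈ Icc a y, g a ≤ g z} with hSdef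
  have haS : a ∈ S := ⟨⟨le_refl a, hab.le⟩, fun z hz => by rw [le_antisymm hz.2 hz.1]⟩
  have hne : S.Nonempty := ⟨a, haS⟩
  have hbdd : BddAbove S := ⟨b, fun y hy => hy.1.2⟩
  set c := sSup S with hcdef
  have hcb : c ≤ b := csSup_le hne fun y hy => hy.1.2
  have hac : a ≤ c := le_csSup hbdd haS
  have hc0 : c ∈ Ioi (0:ℝ) := lt_of_lt_of_le ha hac
  obtain ⟨δ, hδ, hδ0, hmono⟩ := hloc c hc0
  obtain ⟨y, hyS, hy⟩ := exists_lt_of_lt_csSup hne (by linarith : c - δ < c)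
  have hyc : y ≤ c := le_csSup hbdd hyS
  have hkey : min b (c + δ) ∈ S := by
    refine ⟨⟨le_min hab.le (by linarith), min_le_left _ _⟩, ?_⟩
    intro z hz
    by_cases hzy : z ≤ y
    · exact hyS.2 z ⟨hz.1, hzy⟩
    · push_neg at hzy
      have hz1 : c - δ ≤ z := le_of_lt (lt_of_lt_of_le hy hzy.le)
      have hz2 : z ≤ c + δ := le_trans hz.2 (min_le_right _ _)
      have hay : a ≤ y := hyS.1.1
      have h1 : g a ≤ g (max a (c - δ)) :=
        hyS.2 _ ⟨le_max_left _ _, max_le hay (by linarith)⟩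
      have h2 : g (max a (c - δ)) ≤ g z := by
        refine hmono ⟨le_max_right _ _, max_le (by linarith) (by linarith)⟩ ⟨hz1, hz2⟩ ?_
        exact max_le (hz.1) hz1
      linarith
  have hminc : min b (c + δ) ≤ c := le_csSup hbdd hkey
  have hbc : b ≤ c := by
    rcases min_cases b (c + δ) with ⟨h1, _⟩ | ⟨h1, h2⟩
    · rw [h1] at hminc; exact hminc
    · rw [h1] at hminc; linarith
  have hbS : b ∈ S := by
    have : min b (c + δ) = b := min_eq_left (by linarith)
    rwa [this] at hkey
  exact hbS.2 b ⟨hab.le, le_refl b⟩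

lemma monotoneOn_of_locLip_ae_deriv_nonneg {g : ℝ → ℝ}
    (hlip : LocLip g)
    (h : ∀ᵐ x ∂(volume.restrict (Ioi (0:ℝ))), 0 ≤ deriv g x) :
    MonotoneOn g (Ioi (0:ℝ)) := by
  have h' : ∀ᵐ x : ℝ, x ∈ Ioi (0:ℝ) → 0 ≤ deriv g x := (ae_restrict_iff' measurableSet_Ioi).1 h
  apply monotoneOn_Ioi_of_locally
  intro x hx
  obtain ⟨ε, hε, K, hK⟩ := hlip x hx
  have hx0 : (0:ℝ) < x := hx
  set δ := min (ε/2) (x/2) with hδdef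
  have hδ : 0 < δ := lt_min (by linarith) (by linarith)
  have hδε : δ ≤ ε/2 := min_le_left _ _
  have hδx : δ ≤ x/2 := min_le_right _ _
  have hxδ : 0 < x - δ := by linarith
  refine ⟨δ, hδ, hxδ, ?_⟩
  set lo := x - δ with hlo
  set hi := x + δ with hhi
  have hsub : Icc lo hi ⊆ Metric.ball x ε ∩ Ioi 0 := by
    intro y hy
    refine ⟨?_, lt_of_lt_of_le hxδ hy.1⟩
    rw [Metric.mem_ball, Real.dist_eq, abs_sub_lt_iff]
    constructor <;> [skip; skip] <;>
      · have h1 := hy.1; have h2 := hy.2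
        simp only [hlo, hhi] at h1 h2
        linarith
  have hlab : lo ≤ hi := by simp only [hlo, hhi]; linarith
  set gt := fun y => g (max lo (min y hi)) with hgtdef
  have hgtlip : LipschitzWith K gt := lipschitzWith_clamp hlab hsub hK
  have hnull : volume ({lo, hi} : Set ℝ) = 0 := (Set.toFinite _).measure_zero _
  have hae : ∀ᵐ y : ℝ, 0 ≤ deriv gt y := by
    filter_upwards [h', measure_eq_zero_iff_ae_notMem.mp hnull] with y hy hy2
    simp only [mem_insert_iff, mem_singleton_iff, not_or] at hy2
    rcases lt_trichotomy y lo with h1 | h1 | h1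
    · have hev : gt =ᶠ[𝓝 y] fun _ => g lo := by
        filter_upwards [Iio_mem_nhds h1] with z hz
        have hmz : min z hi ≤ lo := le_of_lt (lt_of_le_of_lt (min_le_left _ _) hz)
        simp only [hgtdef, max_eq_left hmz]
      rw [hev.deriv_eq, deriv_const]
    · exact absurd h1 hy2.1
    · rcases lt_trichotomy y hi with h2 | h2 | h2
      · have hev : gt =ᶠ[𝓝 y] g := by
          filter_upwards [Ioo_mem_nhds h1 h2] with z hz
          simp only [hgtdef, min_eq_left hz.2.le, max_eq_right hz.1.le]
        rw [hev.deriv_eq]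
        exact hy (lt_trans hxδ h1)
      · exact absurd h2 hy2.2
      · have hev : gt =ᶠ[𝓝 y] fun _ => g hi := by
          filter_upwards [Ioi_mem_nhds h2] with z hz
          have : min z hi = hi := min_eq_right hz.le
          simp only [hgtdef, this, max_eq_right hlab]
        rw [hev.deriv_eq, deriv_const]
  have hmono := lipschitz_mono_of_ae hgtlip hae
  intro u hu v hv huv
  have hu' : gt u = g u := by
    simp only [hgtdef, min_eq_left hu.2, max_eq_right hu.1]
  have hv' : gt v = g v := by
    simp only [hgtdef, min_eq_left hv.2, max_eq_right hv.1]
  rw [← hu', ← hv']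
  exact hmono huv



lemma ae_differentiableAt_of_locLip {g : ℝ → ℝ} (hlip : LocLip g) :
    ∀ᵐ x ∂(volume.restrict (Ioi (0:ℝ))), DifferentiableAt ℝ g x := by
  have hB0 : volume {x | x ∈ Ioi (0:ℝ) ∧ ¬ DifferentiableAt ℝ g x} = 0 := by
    apply measure_null_of_locally_null
    intro x hx
    obtain ⟨ε, hε, K, hK⟩ := hlip x hx.1
    have hx0 : (0:ℝ) < x := hx.1
    set δ := min (ε/2) (x/2) with hδdef
    have hδ : 0 < δ := lt_min (by linarith) (by linarith)
    have hδε : δ ≤ ε/2 := min_le_left _ _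
    have hδx : δ ≤ x/2 := min_le_right _ _
    set lo := x - δ with hlo
    set hi := x + δ with hhi
    have hxδ : 0 < lo := by simp only [hlo]; linarith
    have hsub : Icc lo hi ⊆ Metric.ball x ε ∩ Ioi 0 := by
      intro y hy
      refine ⟨?_, lt_of_lt_of_le hxδ hy.1⟩
      rw [Metric.mem_ball, Real.dist_eq, abs_sub_lt_iff]
      have h1 := hy.1; have h2 := hy.2
      simp only [hlo, hhi] at h1 h2
      constructor <;> linarith
    have hlab : lo ≤ hi := by simp only [hlo, hhi]; linarith
    set gt := fun y => g (max lo (min y hi)) with hgtdef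
    have hgtlip : LipschitzWith K gt := lipschitzWith_clamp hlab hsub hK
    refine ⟨Metric.ball x δ ∩ {x | x ∈ Ioi (0:ℝ) ∧ ¬ DifferentiableAt ℝ g x},
      Filter.inter_mem (mem_nhdsWithin_of_mem_nhds (Metric.ball_mem_nhds x hδ))
        self_mem_nhdsWithin, ?_⟩
    have hrad : volume {y | ¬ DifferentiableAt ℝ gt y} = 0 :=
      ae_iff.mp (hgtlip.ae_differentiableAt (μ := volume))
    apply measure_mono_null _ hrad
    intro y hy
    have hyb : y ∈ Metric.ball x δ := hy.1
    rw [Metric.mem_ball, Real.dist_eq, abs_sub_lt_iff] at hyb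
    have hyo : y ∈ Ioo lo hi := by
      simp only [hlo, hhi, mem_Ioo]; constructor <;> linarith
    have hev : gt =ᶠ[𝓝 y] g := by
      filter_upwards [Ioo_mem_nhds hyo.1 hyo.2] with z hz
      simp only [hgtdef, min_eq_left hz.2.le, max_eq_right hz.1.le]
    intro hdiff
    exact hy.2.2 (hev.differentiableAt_iff.mp hdiff)
  rw [ae_restrict_iff' measurableSet_Ioi]
  rw [show {x | x ∈ Ioi (0:ℝ) ∧ ¬ DifferentiableAt ℝ g x} =
      {x | ¬ (x ∈ Ioi (0:ℝ) → DifferentiableAt ℝ g x)} by ext z; simp [_root_.not_imp]] at hB0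
  exact ae_iff.mpr hB0

lemma hasDerivAt_of_locLip_deriv {f : ℝ → ℝ}
    (hflip : LocLip f)
    (hderiv : ∀ x ∈ Ioi (0:ℝ), ContinuousAt (deriv f) x) :
    ∀ x ∈ Ioi (0:ℝ), HasDerivAt f (deriv f x) x := by
  intro x hx
  obtain ⟨ε, hε, K, hK⟩ := hflip x hx
  have hx0 : (0:ℝ) < x := hx
  set δ := min (ε/2) (x/2) with hδdef
  have hδ : 0 < δ := lt_min (by linarith) (by linarith)
  have hδε : δ ≤ ε/2 := min_le_left _ _
  have hδx : δ ≤ x/2 := min_le_right _ _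
  set lo := x - δ with hlo
  set hi := x + δ with hhi
  have hxδ : 0 < lo := by simp only [hlo]; linarith
  have hsub : Icc lo hi ⊆ Metric.ball x ε ∩ Ioi 0 := by
    intro y hy
    refine ⟨?_, lt_of_lt_of_le hxδ hy.1⟩
    rw [Metric.mem_ball, Real.dist_eq, abs_sub_lt_iff]
    have h1 := hy.1; have h2 := hy.2
    simp only [hlo, hhi] at h1 h2
    constructor <;> linarith
  have hlab : lo ≤ hi := by simp only [hlo, hhi]; linarith
  set gt := fun y => f (max lo (min y hi)) with hgtdef
  have hgtlip : LipschitzWith K gt := lipschitzWith_clamp hlab hsub hK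
  set u₀ := x - δ/2 with hu₀
  set v₀ := x + δ/2 with hv₀
  have hu₀Ioo : ∀ y ∈ Icc u₀ v₀, y ∈ Ioo lo hi := by
    intro y hy
    have h1 := hy.1; have h2 := hy.2
    simp only [hu₀, hv₀] at h1 h2
    simp only [hlo, hhi, mem_Ioo]; constructor <;> linarith
  have hgtev : ∀ y ∈ Ioo lo hi, gt =ᶠ[𝓝 y] f := by
    intro y hy
    filter_upwards [Ioo_mem_nhds hy.1 hy.2] with z hz
    simp only [hgtdef, min_eq_left hz.2.le, max_eq_right hz.1.le]
  -- FTC equality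
  have hftc : ∀ t ∈ Icc u₀ v₀, f t = f u₀ + ∫ s in u₀..t, deriv f s := by
    intro t ht
    have hu₀t : u₀ ≤ t := ht.1
    have h1 := lipschitz_ftc hgtlip hu₀t
    have hgu : gt u₀ = f u₀ := by
      have := hu₀Ioo u₀ ⟨le_refl _, by simp only [hu₀, hv₀]; linarith⟩
      simp only [hgtdef, min_eq_left this.2.le, max_eq_right this.1.le]
    have hgtt : gt t = f t := by
      have := hu₀Ioo t ht
      simp only [hgtdef, min_eq_left this.2.le, max_eq_right this.1.le]
    have h2 : ∫ s in u₀..t, deriv gt s = ∫ s in u₀..t, deriv f s := by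
      apply intervalIntegral.integral_congr
      intro s hs
      have hs' : s ∈ Icc u₀ t := by rwa [uIcc_of_le hu₀t] at hs
      have hsIoo : s ∈ Ioo lo hi := hu₀Ioo s ⟨hs'.1, le_trans hs'.2 ht.2⟩
      exact (hgtev s hsIoo).deriv_eq
    rw [h2, hgu, hgtt] at h1
    linarith
  -- FTC-1
  have hintd : IntervalIntegrable (deriv f) volume u₀ x := by
    apply ContinuousOn.intervalIntegrable
    intro y hy
    rw [uIcc_of_le (by simp only [hu₀]; linarith : u₀ ≤ x)] at hy
    have : (0:ℝ) < y := lt_of_lt_of_le (by simp only [hu₀]; linarith : (0:ℝ) < u₀) hy.1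
    exact (hderiv y this).continuousWithinAt
  have hF : HasDerivAt (fun t => ∫ s in u₀..t, deriv f s) (deriv f x) x :=
    integral_hasDerivAt_right hintd
      ((stronglyMeasurable_deriv f).stronglyMeasurableAtFilter)
      (hderiv x hx)
  have hFx : HasDerivAt (fun t => f u₀ + ∫ s in u₀..t, deriv f s) (deriv f x) x :=
    hF.const_add (f u₀)
  have hxIoo : x ∈ Ioo u₀ v₀ := by simp only [hu₀, hv₀, mem_Ioo]; constructor <;> linarith
  have hev2 : (fun t => f u₀ + ∫ s in u₀..t, deriv f s) =ᶠ[𝓝 x] f := by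
    filter_upwards [Ioo_mem_nhds hxIoo.1 hxIoo.2] with t ht
    exact (hftc t ⟨ht.1.le, ht.2.le⟩).symm
  exact hFx.congr_of_eventuallyEq hev2.symm


lemma nonneg_deriv_of_monotoneOn {g : ℝ → ℝ} {d x : ℝ} (hx : 0 < x)
    (hg : MonotoneOn g (Ioi 0)) (hd : HasDerivAt g d x) : 0 ≤ d := by
  have h := hasDerivAt_iff_tendsto_slope.1 hd
  have h2 : Tendsto (slope g x) (𝓝[>] x) (𝓝 d) :=
    h.mono_left (nhdsWithin_mono _ (fun y hy => ne_of_gt hy))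
  refine ge_of_tendsto h2 ?_
  filter_upwards [self_mem_nhdsWithin] with y hy
  have hxy : x < y := hy
  have hmono : g x ≤ g y := hg hx (lt_trans hx hxy) hxy.le
  rw [slope_def_field]
  apply div_nonneg (by linarith) (by linarith)

section Ufacts
variable {U : ℝ → ℝ}

lemma U_locLip (hUcont : ContinuousOn U (Ici 0)) (hUconv : ConvexOn ℝ (Ici 0) U) : LocLip U := by
  intro x hx
  have hx0 : (0:ℝ) < x := hx
  have hball : Metric.ball x (x/2) ⊆ Ici (0:ℝ) := by
    intro y hy; rw [Metric.mem_ball, Real.dist_eq, abs_sub_lt_iff] at hy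
    have := hy.2; simp only [mem_Ici]; linarith
  have hconv' : ConvexOn ℝ (Metric.ball x (x/2)) U := hUconv.subset hball (convex_ball _ _)
  have hIccIci : Icc (x/2) (3*x/2) ⊆ Ici (0:ℝ) := by
    intro y hy; simp only [mem_Ici]; linarith [hy.1]
  have himg : IsCompact (U '' Icc (x/2) (3*x/2)) :=
    isCompact_Icc.image_of_continuousOn (hUcont.mono hIccIci)
  have hball2 : Metric.ball x (x/2) ⊆ Icc (x/2) (3*x/2) := by
    intro y hy; rw [Metric.mem_ball, Real.dist_eq, abs_sub_lt_iff] at hy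
    constructor <;> [linarith [hy.2]; linarith [hy.1]]
  have hbd : Bornology.IsBounded (U '' Metric.ball x (x/2)) :=
    himg.isBounded.subset (image_mono hball2)
  obtain ⟨K, hK⟩ := hconv'.exists_lipschitzOnWith_of_isBounded
    (show x/4 < x/2 by linarith) hbd
  exact ⟨x/4, by linarith, K, hK.mono inter_subset_left⟩

lemma derivU_contAt
    (hU'lip : ∀ s ∈ Ioi (0:ℝ), ∃ ε > (0:ℝ), ∃ K : NNReal,
      LipschitzOnWith K (deriv U) (Metric.ball s ε ∩ Ioi 0)) :
    ∀ x ∈ Ioi (0:ℝ), ContinuousAt (deriv U) x := by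
  intro x hx
  obtain ⟨ε, hε, K, hK⟩ := hU'lip x hx
  have hmem : Metric.ball x ε ∩ Ioi 0 ∈ 𝓝 x :=
    Filter.inter_mem (Metric.ball_mem_nhds x hε) (Ioi_mem_nhds hx)
  exact hK.continuousOn.continuousAt hmem

end Ufacts

/-- McCann's condition `DC(N)` (finite `N`): for a continuous convex entropy
`U : [0,∞) → ℝ` with `U(0) = 0` and locally Lipschitz derivative on `(0,∞)`,
with pressure `P(r) = rU'(r) - U(r)`, one has `P(0) = lim_{r↓0} P(r) = 0` and
`rP'(r) - P(r) ≥ -P(r)/N` for a.e. `r > 0` **iff** the function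
`V(r) = r^N U(r^{-N})` is convex and nonincreasing on `(0,∞)`. -/
theorem stmt6 (N : ℝ) (hN : 1 ≤ N) (U : ℝ → ℝ) (P : ℝ → ℝ)
    (hUcont : ContinuousOn U (Ici 0)) (hUconv : ConvexOn ℝ (Ici 0) U)
    (hU0 : U 0 = 0)
    (hU'lip : ∀ s ∈ Ioi (0:ℝ), ∃ ε > (0:ℝ), ∃ K : NNReal,
      LipschitzOnWith K (deriv U) (Metric.ball s ε ∩ Ioi 0))
    (hPdef : ∀ r, P r = r * deriv U r - U r) :
    (P 0 = 0 ∧ Tendsto P (nhdsWithin 0 (Ioi 0)) (nhds 0) ∧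
      (∀ᵐ r ∂(volume.restrict (Ioi (0:ℝ))), -(P r) / N ≤ r * deriv P r - P r))
    ↔
    (ConvexOn ℝ (Ioi 0) (fun r : ℝ => r ^ N * U (r ^ (-N))) ∧
      AntitoneOn (fun r : ℝ => r ^ N * U (r ^ (-N))) (Ioi 0)) := by
  have hNpos : (0:ℝ) < N := lt_of_lt_of_le one_pos hN
  have hN0 : N ≠ 0 := ne_of_gt hNpos
  set W : ℝ → ℝ := fun r : ℝ => r ^ N * U (r ^ (-N)) with hWdef
  set G : ℝ → ℝ := fun s : ℝ => s ^ (1/N - 1) * P s with hGdef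
  -- basic facts
  have hUlip : LocLip U := U_locLip hUcont hUconv
  have hUderiv : ∀ x ∈ Ioi (0:ℝ), HasDerivAt U (deriv U x) x :=
    hasDerivAt_of_locLip_deriv hUlip (derivU_contAt hU'lip)
  have hPlip : LocLip P := by
    have : LocLip (fun y => y * deriv U y - U y) := (locLip_id.mul hU'lip).sub hUlip
    intro x hx
    obtain ⟨ε, hε, K, hK⟩ := this x hx
    refine ⟨ε, hε, K, ?_⟩
    have : P = fun y => y * deriv U y - U y := funext hPdef
    rw [this]
    exact hK
  have hGlip : LocLip G := by
    have h1 : (1/N - 1) - 1 ≤ 0 := by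
      have : 1/N ≤ 1 := by
        rw [div_le_one hNpos]; exact hN
      linarith
    exact (locLip_rpow h1).mul hPlip
  have hPnonneg : ∀ r ∈ Ioi (0:ℝ), 0 ≤ P r := by
    intro r hr
    have hr0 : (0:ℝ) < r := hr
    have hslope := hUconv.slope_le_deriv (self_mem_Ici) (le_of_lt hr0) hr0
      (hUderiv r hr).differentiableAt
    rw [slope_def_field, hU0, sub_zero, sub_zero, div_le_iff₀ hr0] at hslope
    rw [hPdef]
    linarith
  -- the derivative of W
  have hWderiv : ∀ r ∈ Ioi (0:ℝ), HasDerivAt W (-N * (r ^ (N-1) * P (r ^ (-N)))) r := by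
    intro r hr
    have hr0 : (0:ℝ) < r := hr
    have hs0 : (0:ℝ) < r ^ (-N) := Real.rpow_pos_of_pos hr0 _
    have h1 : HasDerivAt (fun t : ℝ => t ^ (-N)) (-N * r ^ (-N - 1)) r :=
      Real.hasDerivAt_rpow_const (Or.inl hr0.ne')
    have h2 : HasDerivAt U (deriv U (r ^ (-N))) (r ^ (-N)) := hUderiv _ hs0
    have h3 : HasDerivAt (fun t : ℝ => U (t ^ (-N)))
        (deriv U (r ^ (-N)) * (-N * r ^ (-N - 1))) r := h2.comp r h1
    have h4 : HasDerivAt (fun t : ℝ => t ^ N) (N * r ^ (N-1)) r :=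
      Real.hasDerivAt_rpow_const (Or.inl hr0.ne')
    have h5 : HasDerivAt (fun t : ℝ => t ^ N * U (t ^ (-N))) _ r := h4.mul h3
    have e1 : r ^ N * r ^ (-N - 1) = r ^ (N - 1) * r ^ (-N) := by
      rw [← Real.rpow_add hr0, ← Real.rpow_add hr0]; ring_nf
    convert h5 using 1
    rw [hPdef]
    linear_combination (N * deriv U (r ^ (-N))) * e1
  have hWdiff : ∀ x ∈ Ioi (0:ℝ), DifferentiableAt ℝ W x :=
    fun x hx => (hWderiv x hx).differentiableAt
  have hWd : ∀ r ∈ Ioi (0:ℝ), deriv W r = -N * (r ^ (N-1) * P (r ^ (-N))) :=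
    fun r hr => (hWderiv r hr).deriv
  -- link : r^(N-1) * P (r^(-N)) = G (r^(-N))
  have hGeq : ∀ r ∈ Ioi (0:ℝ), G (r ^ (-N)) = r ^ (N-1) * P (r ^ (-N)) := by
    intro r hr
    have hr0 : (0:ℝ) < r := hr
    have e : (r ^ (-N)) ^ (1/N - 1) = r ^ (N - 1) := by
      rw [← Real.rpow_mul hr0.le]
      congr 1
      field_simp
      ring
    simp only [hGdef]
    rw [e]
  -- derivative of G where P is differentiable
  have hGderiv : ∀ r : ℝ, 0 < r → DifferentiableAt ℝ P r →
      HasDerivAt G (r ^ (1/N - 2) * ((1/N - 1) * P r + r * deriv P r)) r := by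
    intro r hr0 hPd
    have h1 : HasDerivAt (fun s : ℝ => s ^ (1/N - 1)) ((1/N-1) * r ^ (1/N - 1 - 1)) r :=
      Real.hasDerivAt_rpow_const (Or.inl hr0.ne')
    have h2 : HasDerivAt (fun s : ℝ => s ^ (1/N - 1) * P s) _ r := h1.mul hPd.hasDerivAt
    have e1 : (1/N - 1 - 1 : ℝ) = 1/N - 2 := by ring
    have e2 : r ^ (1/N - 1) = r ^ (1/N - 2) * r := by
      rw [show (1/N - 1 : ℝ) = (1/N - 2) + 1 by ring, Real.rpow_add_one hr0.ne']
    convert h2 using 1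
    rw [e1, e2]
    ring
  have hWcont : ContinuousOn W (Ioi 0) :=
    fun x hx => (hWdiff x hx).continuousAt.continuousWithinAt
  have hWdiffOn : DifferentiableOn ℝ W (interior (Ioi (0:ℝ))) := by
    rw [interior_Ioi]
    exact fun x hx => (hWdiff x hx).differentiableWithinAt
  have hWanti : AntitoneOn W (Ioi 0) := by
    apply antitoneOn_of_deriv_nonpos (convex_Ioi 0) hWcont hWdiffOn
    intro x hx
    rw [interior_Ioi] at hx
    rw [hWd x hx]
    have h1 : 0 ≤ x ^ (N-1) * P (x ^ (-N)) :=
      mul_nonneg (Real.rpow_nonneg (le_of_lt hx) _)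
        (hPnonneg _ (Real.rpow_pos_of_pos hx _))
    exact mul_nonpos_of_nonpos_of_nonneg (by linarith) h1
  constructor
  · rintro ⟨hP0, hPlim, hae⟩
    refine ⟨?_, hWanti⟩
    have hGae : ∀ᵐ x ∂(volume.restrict (Ioi (0:ℝ))), 0 ≤ deriv G x := by
      filter_upwards [hae, ae_differentiableAt_of_locLip hPlip,
        ae_restrict_mem measurableSet_Ioi] with r h1 h2 h3
      have hr0 : (0:ℝ) < r := h3
      have hG := hGderiv r hr0 h2
      rw [hG.deriv]
      apply mul_nonneg (Real.rpow_nonneg hr0.le _)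
      have e : (1/N - 1) * P r = P r * N⁻¹ - P r := by ring
      have e2 : -(P r)/N = -(P r * N⁻¹) := by ring
      rw [e2] at h1
      rw [e]
      linarith
    have hGmono := monotoneOn_of_locLip_ae_deriv_nonneg hGlip hGae
    have hWdmono : MonotoneOn (deriv W) (Ioi (0:ℝ)) := by
      intro r1 h1 r2 h2 h12
      have hr1 : (0:ℝ) < r1 := h1
      have hr2 : (0:ℝ) < r2 := h2
      rw [hWd r1 h1, hWd r2 h2, ← hGeq r1 h1, ← hGeq r2 h2]
      have hs : r2 ^ (-N) ≤ r1 ^ (-N) :=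
        Real.rpow_le_rpow_of_nonpos hr1 h12 (by linarith)
      have hle := hGmono (Real.rpow_pos_of_pos hr2 (-N) : (r2:ℝ) ^ (-N) ∈ Ioi (0:ℝ))
        (Real.rpow_pos_of_pos hr1 (-N)) hs
      nlinarith
    apply MonotoneOn.convexOn_of_deriv (convex_Ioi 0) hWcont hWdiffOn
    rw [interior_Ioi]; exact hWdmono
  · rintro ⟨hconv, -⟩
    refine ⟨?_, ?_, ?_⟩
    · rw [hPdef 0, hU0]; ring
    · -- squeeze argument for the limit
      have hU0cont : Tendsto U (𝓝[Ici 0] 0) (𝓝 0) := by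
        have := hUcont 0 self_mem_Ici
        rw [ContinuousWithinAt, hU0] at this
        exact this
      have t1 : Tendsto U (𝓝[>] (0:ℝ)) (𝓝 0) :=
        hU0cont.mono_left (nhdsWithin_mono _ Ioi_subset_Ici_self)
      have hmul : Tendsto (fun r : ℝ => 2*r) (𝓝[>] (0:ℝ)) (𝓝[Ici 0] 0) := by
        apply tendsto_nhdsWithin_of_tendsto_nhds_of_eventually_within
        · have h0 : Tendsto (fun r : ℝ => 2*r) (𝓝 (0:ℝ)) (𝓝 (0:ℝ)) := by
            have hc : Continuous (fun r : ℝ => 2*r) := by continuity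
            simpa using hc.tendsto 0
          exact h0.mono_left nhdsWithin_le_nhds
        · filter_upwards [self_mem_nhdsWithin] with r hr
          have : (0:ℝ) < r := hr
          simp only [mem_Ici]; linarith
      have t2 : Tendsto (fun r : ℝ => U (2*r)) (𝓝[>] (0:ℝ)) (𝓝 0) := hU0cont.comp hmul
      have g0 : Tendsto (fun r : ℝ => U (2*r) - 2 * U r) (𝓝[>] (0:ℝ)) (𝓝 0) := by
        have := t2.sub ((t1.const_mul (2:ℝ)))
        simpa using this
      apply squeeze_zero' ?_ ?_ g0
      · filter_upwards [self_mem_nhdsWithin] with r hr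
        exact hPnonneg r hr
      · filter_upwards [self_mem_nhdsWithin] with r hr
        have hr0 : (0:ℝ) < r := hr
        have h := hUconv.deriv_le_slope (mem_Ici.2 hr0.le)
          (mem_Ici.2 (by linarith : (0:ℝ) ≤ 2*r)) (by linarith)
          (hUderiv r hr).differentiableAt
        rw [slope_def_field] at h
        have h2 : deriv U r * r ≤ U (2*r) - U r := by
          have e : 2*r - r = r := by ring
          rw [e] at h
          calc deriv U r * r ≤ ((U (2*r) - U r)/r) * r :=
                mul_le_mul_of_nonneg_right h hr0.le
          _ = U (2*r) - U r := by field_simp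
        rw [hPdef]; linarith
    · have hWdmono : MonotoneOn (deriv W) (Ioi (0:ℝ)) :=
        hconv.monotoneOn_deriv hWdiff
      have key : ∀ s : ℝ, 0 < s → deriv W (s ^ (-(1/N))) = -N * G s := by
        intro s hs
        have hrs : (0:ℝ) < s ^ (-(1/N)) := Real.rpow_pos_of_pos hs _
        rw [hWd _ hrs, ← hGeq _ hrs]
        congr 2
        rw [← Real.rpow_mul hs.le]
        rw [show (-(1/N)) * (-N) = 1 by field_simp, Real.rpow_one]
      have hGmono : MonotoneOn G (Ioi (0:ℝ)) := by
        intro s1 hs1 s2 hs2 hs12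
        have h1 : (0:ℝ) < s1 := hs1
        have h2 : (0:ℝ) < s2 := hs2
        have hr1 : (0:ℝ) < s1 ^ (-(1/N)) := Real.rpow_pos_of_pos h1 _
        have hr2 : (0:ℝ) < s2 ^ (-(1/N)) := Real.rpow_pos_of_pos h2 _
        have hr21 : s2 ^ (-(1/N)) ≤ s1 ^ (-(1/N)) := by
          apply Real.rpow_le_rpow_of_nonpos h1 hs12
          have : (0:ℝ) < 1/N := by positivity
          linarith
        have hmono := hWdmono (mem_Ioi.2 hr2) (mem_Ioi.2 hr1) hr21
        rw [key s2 h2, key s1 h1] at hmono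
        nlinarith
      filter_upwards [ae_differentiableAt_of_locLip hPlip,
        ae_restrict_mem measurableSet_Ioi] with r h2 h3
      have hr0 : (0:ℝ) < r := h3
      have hG := hGderiv r hr0 h2
      have hd : 0 ≤ r ^ (1/N-2) * ((1/N-1) * P r + r * deriv P r) :=
        nonneg_deriv_of_monotoneOn hr0 hGmono hG
      have hpos : (0:ℝ) < r ^ (1/N-2 : ℝ) := Real.rpow_pos_of_pos hr0 _
      have h4 : 0 ≤ (1/N-1) * P r + r * deriv P r := by
        have h5 := div_nonneg hd hpos.le
        rwa [mul_div_cancel_left₀ _ (ne_of_gt hpos)] at h5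
      have e : (1/N - 1) * P r = P r * N⁻¹ - P r := by ring
      have e2 : -(P r)/N = -(P r * N⁻¹) := by ring
      rw [e2]
      rw [e] at h4
      linarith
end

section
/- Let Y be a Polish space with a nonnegative σ-finite Borel measure ν, let w_n ∈ L²(Y,ν) converge weakly in L²(Y,ν) to w, and let Z_n ∈ L^∞(Y,ν) be nonnegative and converge ν-a.e. to Z. Then liminf_n ∫_Y Z_n |w_n|² dν ≥ ∫_Y Z |w|² dν. -/
open MeasureTheory Filter
open scoped ENNReal

private lemma weak_lsc {Y : Type*} [MeasurableSpace Y] (ν : Measure Y)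
    (w : ℕ → Y → ℝ) (wlim : Y → ℝ)
    (hw : ∀ n, MemLp (w n) 2 ν) (hwlim : MemLp wlim 2 ν)
    (hweak : ∀ g : Y → ℝ, MemLp g 2 ν →
      Tendsto (fun n => ∫ y, w n y * g y ∂ν) atTop (nhds (∫ y, wlim y * g y ∂ν)))
    (ψ : Y → ℝ) (hψm : Measurable ψ) (M : ℝ)
    (hψ0 : ∀ y, 0 ≤ ψ y) (hψM : ∀ y, ψ y ≤ M) :
    ENNReal.ofReal (∫ y, ψ y * wlim y ^ 2 ∂ν) ≤
      liminf (fun n => ∫⁻ y, ENNReal.ofReal (ψ y * w n y ^ 2) ∂ν) atTop := by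
  set M' : ℝ := max M 0 with hM'def
  have hψM' : ∀ y, ψ y ≤ M' := fun y => le_trans (hψM y) (le_max_left _ _)
  have hM'0 : 0 ≤ M' := le_max_right _ _
  set g : Y → ℝ := fun y => ψ y * wlim y with hgdef
  have hg : MemLp g 2 ν := by
    refine hwlim.of_le_mul (c := M') (hψm.aestronglyMeasurable.mul hwlim.1)
      (Filter.Eventually.of_forall fun y => ?_)
    rw [Real.norm_eq_abs, Real.norm_eq_abs, abs_mul, abs_of_nonneg (hψ0 y)]
    exact mul_le_mul_of_nonneg_right (hψM' y) (abs_nonneg _)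
  -- integrability facts
  have intψw2 : ∀ n, Integrable (fun y => ψ y * w n y ^ 2) ν := by
    intro n
    refine Integrable.mono' ((hw n).integrable_sq.const_mul M')
      ((hψm.aemeasurable.mul (((hw n).1.aemeasurable).pow_const 2)).aestronglyMeasurable)
      (Filter.Eventually.of_forall fun y => ?_)
    rw [Real.norm_eq_abs, abs_mul, abs_of_nonneg (hψ0 y), abs_of_nonneg (sq_nonneg _)]
    exact mul_le_mul_of_nonneg_right (hψM' y) (sq_nonneg _)
  have intψwlim2 : Integrable (fun y => ψ y * wlim y ^ 2) ν := by
    refine Integrable.mono' (hwlim.integrable_sq.const_mul M')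
      ((hψm.aemeasurable.mul ((hwlim.1.aemeasurable).pow_const 2)).aestronglyMeasurable)
      (Filter.Eventually.of_forall fun y => ?_)
    rw [Real.norm_eq_abs, abs_mul, abs_of_nonneg (hψ0 y), abs_of_nonneg (sq_nonneg _)]
    exact mul_le_mul_of_nonneg_right (hψM' y) (sq_nonneg _)
  have intmul : ∀ (u v : Y → ℝ), MemLp u 2 ν → MemLp v 2 ν →
      Integrable (fun y => u y * v y) ν := by
    intro u v hu hv
    refine Integrable.mono' ((hu.integrable_sq.add hv.integrable_sq).div_const 2)
      (hu.1.mul hv.1) (Filter.Eventually.of_forall fun y => ?_)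
    rw [Real.norm_eq_abs, abs_mul]
    simp only [Pi.add_apply]
    nlinarith [sq_nonneg (|u y| - |v y|), sq_abs (u y), sq_abs (v y), abs_nonneg (u y),
      abs_nonneg (v y)]
  have intwng : ∀ n, Integrable (fun y => w n y * g y) ν := fun n => intmul _ _ (hw n) hg
  -- the key pointwise convexity inequality
  have key : ∀ n, (∫ y, (2 * (w n y * g y) - ψ y * wlim y ^ 2) ∂ν) ≤
      ∫ y, ψ y * w n y ^ 2 ∂ν := by
    intro n
    refine integral_mono (((intwng n).const_mul 2).sub intψwlim2) (intψw2 n) fun y => ?_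
    have h1 := hψ0 y
    have h2 := sq_nonneg (w n y - wlim y)
    have := mul_nonneg h1 h2
    simp only [hgdef]
    nlinarith
  -- the limit of the lower bound
  have hgl : (∫ y, wlim y * g y ∂ν) = ∫ y, ψ y * wlim y ^ 2 ∂ν := by
    refine integral_congr_ae (Filter.Eventually.of_forall fun y => ?_)
    simp only [hgdef]; ring
  have T : Tendsto (fun n => ∫ y, (2 * (w n y * g y) - ψ y * wlim y ^ 2) ∂ν) atTop
      (nhds (∫ y, ψ y * wlim y ^ 2 ∂ν)) := by
    have h1 : ∀ n, (∫ y, (2 * (w n y * g y) - ψ y * wlim y ^ 2) ∂ν)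
        = 2 * (∫ y, w n y * g y ∂ν) - ∫ y, ψ y * wlim y ^ 2 ∂ν := by
      intro n
      rw [integral_sub ((intwng n).const_mul 2) intψwlim2, integral_const_mul]
    simp only [h1]
    have h2 : Tendsto (fun n => 2 * (∫ y, w n y * g y ∂ν)) atTop
        (nhds (2 * (∫ y, wlim y * g y ∂ν))) := (hweak g hg).const_mul 2
    have h3 := h2.sub_const (∫ y, ψ y * wlim y ^ 2 ∂ν)
    rw [hgl] at h3
    convert h3 using 2
    ring
  have h1 : ∀ n, ENNReal.ofReal (∫ y, (2 * (w n y * g y) - ψ y * wlim y ^ 2) ∂ν) ≤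
      ∫⁻ y, ENNReal.ofReal (ψ y * w n y ^ 2) ∂ν := by
    intro n
    rw [← ofReal_integral_eq_lintegral_ofReal (intψw2 n)
      (Filter.Eventually.of_forall fun y => mul_nonneg (hψ0 y) (sq_nonneg _))]
    exact ENNReal.ofReal_le_ofReal (key n)
  calc ENNReal.ofReal (∫ y, ψ y * wlim y ^ 2 ∂ν)
      = liminf (fun n => ENNReal.ofReal
          (∫ y, (2 * (w n y * g y) - ψ y * wlim y ^ 2) ∂ν)) atTop :=
        ((ENNReal.tendsto_ofReal T).liminf_eq).symm
    _ ≤ liminf (fun n => ∫⁻ y, ENNReal.ofReal (ψ y * w n y ^ 2) ∂ν) atTop :=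
        liminf_le_liminf (Filter.Eventually.of_forall h1)

/-- Joint lower semicontinuity: if `Y` is Polish with a σ-finite Borel measure
`ν`, `w_n ⇀ w` weakly in `L²(Y,ν)` and `Z_n ∈ L^∞(Y,ν)` are nonnegative with
`Z_n → Z` ν-a.e., then `liminf_n ∫ Z_n |w_n|² dν ≥ ∫ Z |w|² dν`. -/
theorem stmt10 {Y : Type*} [TopologicalSpace Y] [PolishSpace Y]
    [MeasurableSpace Y] [BorelSpace Y]
    (ν : Measure Y) [SigmaFinite ν]
    (w : ℕ → Y → ℝ) (wlim : Y → ℝ) (Z : ℕ → Y → ℝ) (Zlim : Y → ℝ)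
    (hw : ∀ n, MemLp (w n) 2 ν) (hwlim : MemLp wlim 2 ν)
    (hweak : ∀ g : Y → ℝ, MemLp g 2 ν →
      Tendsto (fun n => ∫ y, w n y * g y ∂ν) atTop (nhds (∫ y, wlim y * g y ∂ν)))
    (hZmeas : ∀ n, Measurable (Z n))
    (hZpos : ∀ n y, 0 ≤ Z n y)
    (hZbd : ∀ n, ∃ C : ℝ, ∀ᵐ y ∂ν, Z n y ≤ C)
    (hZae : ∀ᵐ y ∂ν, Tendsto (fun n => Z n y) atTop (nhds (Zlim y))) :
    (∫⁻ y, ENNReal.ofReal (Zlim y * (wlim y) ^ 2) ∂ν) ≤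
      liminf (fun n => ∫⁻ y, ENNReal.ofReal (Z n y * (w n y) ^ 2) ∂ν) atTop := by
  classical
  -- measurable nonnegative representative of Zlim
  have hZlim_am : AEMeasurable Zlim ν :=
    aemeasurable_of_tendsto_metrizable_ae _ (fun n => (hZmeas n).aemeasurable) hZae
  set Z' : Y → ℝ := fun y => max (hZlim_am.mk Zlim y) 0 with hZ'def
  have hZ'meas : Measurable Z' := hZlim_am.measurable_mk.max measurable_const
  have hZlim_nonneg : ∀ᵐ y ∂ν, 0 ≤ Zlim y := by
    filter_upwards [hZae] with y hy
    exact ge_of_tendsto' hy fun n => hZpos n y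
  have hZ'eq : Z' =ᵐ[ν] Zlim := by
    filter_upwards [hZlim_am.ae_eq_mk, hZlim_nonneg] with y h1 h2
    simp only [hZ'def, ← h1]
    exact max_eq_left h2
  have hZ'ae : ∀ᵐ y ∂ν, Tendsto (fun n => Z n y) atTop (nhds (Z' y)) := by
    filter_upwards [hZae, hZ'eq] with y h1 h2
    rw [h2]; exact h1
  have hZ'0 : ∀ y, 0 ≤ Z' y := fun y => le_max_right _ _
  -- measurable representative of wlim
  set w' : Y → ℝ := hwlim.1.aemeasurable.mk wlim with hw'def
  have hw'meas : Measurable w' := hwlim.1.aemeasurable.measurable_mk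
  have hw'eq : wlim =ᵐ[ν] w' := hwlim.1.aemeasurable.ae_eq_mk
  have hwlim' : MemLp w' 2 ν := hwlim.ae_eq hw'eq
  -- rewrite the LHS
  have hLHS : (∫⁻ y, ENNReal.ofReal (Zlim y * (wlim y) ^ 2) ∂ν)
      = ∫⁻ y, ENNReal.ofReal (Z' y * w' y ^ 2) ∂ν := by
    refine lintegral_congr_ae ?_
    filter_upwards [hZ'eq, hw'eq] with y h1 h2
    rw [h1, h2]
  rw [hLHS]
  set L := liminf (fun n => ∫⁻ y, ENNReal.ofReal (Z n y * (w n y) ^ 2) ∂ν) atTop with hLdef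
  -- finiteness of ∫⁻ w'^2
  set I₂ : ℝ≥0∞ := ∫⁻ y, ENNReal.ofReal (w' y ^ 2) ∂ν with hI₂def
  have hI₂ : I₂ ≠ ⊤ := by
    rw [hI₂def, ← ofReal_integral_eq_lintegral_ofReal hwlim'.integrable_sq
      (Filter.Eventually.of_forall fun y => sq_nonneg _)]
    exact ENNReal.ofReal_ne_top
  -- the error terms
  set e : ℕ → ℝ≥0∞ := fun k => ENNReal.ofReal ((k : ℝ) + 1)⁻¹ * I₂ + ((k : ℝ≥0∞) + 1)⁻¹
    with hedef
  have he0 : Tendsto e atTop (nhds 0) := by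
    have hr : Tendsto (fun k : ℕ => ((k : ℝ) + 1)⁻¹) atTop (nhds 0) := by
      have := tendsto_one_div_add_atTop_nhds_zero_nat (𝕜 := ℝ)
      simpa [one_div] using this
    have h1 : Tendsto (fun k : ℕ => ENNReal.ofReal ((k : ℝ) + 1)⁻¹ * I₂) atTop
        (nhds (0 * I₂)) := by
      refine ENNReal.Tendsto.mul_const ?_ (Or.inr hI₂)
      simpa using ENNReal.tendsto_ofReal hr
    have h2 : Tendsto (fun k : ℕ => ((k : ℝ≥0∞) + 1)⁻¹) atTop (nhds 0) := by
      have h3 : Tendsto (fun n : ℕ => ((n : ℝ≥0∞))⁻¹) atTop (nhds 0) :=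
        ENNReal.tendsto_inv_nat_nhds_zero
      have h4 := h3.comp (tendsto_add_atTop_nat 1)
      convert h4 using 2 with k
      simp [Function.comp]
    have := h1.add h2
    simpa using this
  -- the per-k bound
  have perk : ∀ k : ℕ, (∫⁻ y in spanningSets ν k,
      ENNReal.ofReal (min (Z' y) k * w' y ^ 2) ∂ν) ≤ L + e k := by
    intro k
    set c : ℝ := ((k : ℝ) + 1)⁻¹ with hcdef
    have hc0 : 0 < c := by positivity
    -- absolute continuity of ∫⁻ w'^2
    obtain ⟨δ, hδ0, hδ⟩ := exists_pos_setLIntegral_lt_of_measure_lt (μ := ν)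
      (f := fun y => ENNReal.ofReal (w' y ^ 2)) hI₂
      (ε := ((k : ℝ≥0∞) + 1)⁻¹ * ((k : ℝ≥0∞) + 1)⁻¹)
      (mul_ne_zero (ENNReal.inv_ne_zero.mpr
          (ENNReal.add_ne_top.mpr ⟨ENNReal.natCast_ne_top k, ENNReal.one_ne_top⟩))
        (ENNReal.inv_ne_zero.mpr
          (ENNReal.add_ne_top.mpr ⟨ENNReal.natCast_ne_top k, ENNReal.one_ne_top⟩)))
    obtain ⟨r, hr0, hrδ⟩ : ∃ r : ℝ, 0 < r ∧ ENNReal.ofReal r < δ := by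
      rcases ENNReal.lt_iff_exists_real_btwn.mp hδ0 with ⟨r, -, hr1, hr2⟩
      exact ⟨r, ENNReal.ofReal_pos.mp (lt_of_le_of_lt zero_le hr1), hr2⟩
    -- Egorov
    obtain ⟨t, hts, htm, htμ, hunif⟩ := tendstoUniformlyOn_of_ae_tendsto
      (f := Z) (g := Z') (μ := ν) (s := spanningSets ν k)
      (fun n => (hZmeas n).stronglyMeasurable) hZ'meas.stronglyMeasurable
      (measurableSet_spanningSets ν k) (measure_spanningSets_lt_top ν k).ne
      (by filter_upwards [hZ'ae] with y hy using fun _ => hy) hr0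
    set E : Set Y := spanningSets ν k \ t with hEdef
    have hE : MeasurableSet E := (measurableSet_spanningSets ν k).diff htm
    have htsmall : (∫⁻ y in t, ENNReal.ofReal (w' y ^ 2) ∂ν)
        < ((k : ℝ≥0∞) + 1)⁻¹ * ((k : ℝ≥0∞) + 1)⁻¹ :=
      hδ t (lt_of_le_of_lt htμ hrδ)
    -- the test weight ψ
    set ψ : Y → ℝ := Set.indicator E (fun y => max (min (Z' y) k - c) 0) with hψdef
    have hψm : Measurable ψ :=
      (((hZ'meas.min measurable_const).sub measurable_const).max measurable_const).indicator hE
    have hψ0 : ∀ y, 0 ≤ ψ y := fun y =>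
      Set.indicator_nonneg (fun y _ => le_max_right _ _) y
    have hψk : ∀ y, ψ y ≤ (k : ℝ) := by
      intro y
      rw [hψdef]
      by_cases hy : y ∈ E
      · rw [Set.indicator_of_mem hy]
        apply max_le
        · have : min (Z' y) (k : ℝ) ≤ k := min_le_right _ _
          linarith [hc0.le]
        · exact Nat.cast_nonneg k
      · rw [Set.indicator_of_notMem hy]
        exact Nat.cast_nonneg k
    -- Step 1 : liminf bound via the weak convergence lemma
    have step1 : (∫⁻ y, ENNReal.ofReal (ψ y * w' y ^ 2) ∂ν) ≤ L := by
      have intψ : Integrable (fun y => ψ y * w' y ^ 2) ν := by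
        refine Integrable.mono' (hwlim'.integrable_sq.const_mul k)
          ((hψm.aemeasurable.mul ((hw'meas.aemeasurable).pow_const 2)).aestronglyMeasurable)
          (Filter.Eventually.of_forall fun y => ?_)
        rw [Real.norm_eq_abs, abs_mul, abs_of_nonneg (hψ0 y), abs_of_nonneg (sq_nonneg _)]
        exact mul_le_mul_of_nonneg_right (hψk y) (sq_nonneg _)
      rw [← ofReal_integral_eq_lintegral_ofReal intψ
        (Filter.Eventually.of_forall fun y => mul_nonneg (hψ0 y) (sq_nonneg _))]
      have hchg : (∫ y, ψ y * w' y ^ 2 ∂ν) = ∫ y, ψ y * wlim y ^ 2 ∂ν := by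
        refine integral_congr_ae ?_
        filter_upwards [hw'eq] with y hy
        rw [hy]
      rw [hchg]
      refine le_trans (weak_lsc ν w wlim hw hwlim hweak ψ hψm k hψ0 hψk) ?_
      rw [hLdef]
      refine liminf_le_liminf ?_
      have hun := (Metric.tendstoUniformlyOn_iff.mp hunif) c hc0
      filter_upwards [hun] with n hn
      refine lintegral_mono fun y => ENNReal.ofReal_le_ofReal ?_
      refine mul_le_mul_of_nonneg_right ?_ (sq_nonneg _)
      rw [hψdef]
      by_cases hy : y ∈ E
      · rw [Set.indicator_of_mem hy]
        have hd := hn y hy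
        rw [Real.dist_eq] at hd
        have h1 : Z' y - c ≤ Z n y := by
          have := abs_lt.mp hd
          linarith [this.1]
        apply max_le
        · have : min (Z' y) k ≤ Z' y := min_le_left _ _
          linarith
        · exact hZpos n y
      · rw [Set.indicator_of_notMem hy]
        exact hZpos n y
    -- Step 2 : compare the truncated integral over the spanning set with ψ
    have hsub : spanningSets ν k ⊆ E ∪ t := by
      intro y hy
      by_cases hyt : y ∈ t
      · exact Or.inr hyt
      · exact Or.inl ⟨hy, hyt⟩
    have hmw : Measurable fun y => ENNReal.ofReal (min (Z' y) k * w' y ^ 2) :=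
      ((hZ'meas.min measurable_const).mul (hw'meas.pow_const 2)).ennreal_ofReal
    calc (∫⁻ y in spanningSets ν k, ENNReal.ofReal (min (Z' y) k * w' y ^ 2) ∂ν)
        ≤ ∫⁻ y in E ∪ t, ENNReal.ofReal (min (Z' y) k * w' y ^ 2) ∂ν :=
          lintegral_mono_set hsub
      _ ≤ (∫⁻ y in E, ENNReal.ofReal (min (Z' y) k * w' y ^ 2) ∂ν)
          + ∫⁻ y in t, ENNReal.ofReal (min (Z' y) k * w' y ^ 2) ∂ν :=
          lintegral_union_le _ _ _
      _ ≤ ((∫⁻ y, ENNReal.ofReal (ψ y * w' y ^ 2) ∂ν)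
            + ENNReal.ofReal c * I₂) + ((k : ℝ≥0∞) + 1)⁻¹ := by
          gcongr
          · -- over E
            have hpt : ∀ y ∈ E, ENNReal.ofReal (min (Z' y) k * w' y ^ 2)
                ≤ ENNReal.ofReal (ψ y * w' y ^ 2) + ENNReal.ofReal (c * w' y ^ 2) := by
              intro y hy
              refine le_trans (ENNReal.ofReal_le_ofReal ?_) (ENNReal.ofReal_add_le)
              have h1 : min (Z' y) k ≤ ψ y + c := by
                rw [hψdef, Set.indicator_of_mem hy]
                have : min (Z' y) k - c ≤ max (min (Z' y) k - c) 0 := le_max_left _ _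
                linarith
              nlinarith [sq_nonneg (w' y)]
            calc (∫⁻ y in E, ENNReal.ofReal (min (Z' y) k * w' y ^ 2) ∂ν)
                ≤ ∫⁻ y in E, (ENNReal.ofReal (ψ y * w' y ^ 2)
                    + ENNReal.ofReal (c * w' y ^ 2)) ∂ν := by
                  refine setLIntegral_mono ?_ hpt
                  exact ((hψm.mul (hw'meas.pow_const 2)).ennreal_ofReal).add
                    ((measurable_const.mul (hw'meas.pow_const 2)).ennreal_ofReal)
              _ = (∫⁻ y in E, ENNReal.ofReal (ψ y * w' y ^ 2) ∂ν)
                  + ∫⁻ y in E, ENNReal.ofReal (c * w' y ^ 2) ∂ν :=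
                  lintegral_add_left ((hψm.mul (hw'meas.pow_const 2)).ennreal_ofReal) _
              _ ≤ (∫⁻ y, ENNReal.ofReal (ψ y * w' y ^ 2) ∂ν) + ENNReal.ofReal c * I₂ := by
                  gcongr
                  · exact Measure.restrict_le_self
                  · calc (∫⁻ y in E, ENNReal.ofReal (c * w' y ^ 2) ∂ν)
                        ≤ ∫⁻ y, ENNReal.ofReal (c * w' y ^ 2) ∂ν :=
                          setLIntegral_le_lintegral _ _
                      _ = ENNReal.ofReal c * I₂ := by
                          rw [hI₂def, ← lintegral_const_mul _ (hw'meas.pow_const 2).ennreal_ofReal]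
                          refine lintegral_congr fun y => ?_
                          rw [ENNReal.ofReal_mul hc0.le]
          · -- over t
            calc (∫⁻ y in t, ENNReal.ofReal (min (Z' y) k * w' y ^ 2) ∂ν)
                ≤ ∫⁻ y in t, (k : ℝ≥0∞) * ENNReal.ofReal (w' y ^ 2) ∂ν := by
                  refine lintegral_mono fun y => ?_
                  rw [← ENNReal.ofReal_natCast k, ← ENNReal.ofReal_mul (by positivity)]
                  refine ENNReal.ofReal_le_ofReal ?_
                  exact mul_le_mul_of_nonneg_right (min_le_right _ _) (sq_nonneg _)
              _ = (k : ℝ≥0∞) * ∫⁻ y in t, ENNReal.ofReal (w' y ^ 2) ∂ν :=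
                  lintegral_const_mul _ (hw'meas.pow_const 2).ennreal_ofReal
              _ ≤ ((k : ℝ≥0∞) + 1) * (((k : ℝ≥0∞) + 1)⁻¹ * ((k : ℝ≥0∞) + 1)⁻¹) :=
                  mul_le_mul' le_self_add htsmall.le
              _ = ((k : ℝ≥0∞) + 1)⁻¹ := by
                  rw [← mul_assoc, ENNReal.mul_inv_cancel
                    (by simp : ((k : ℝ≥0∞) + 1) ≠ 0)
                    (ENNReal.add_ne_top.mpr ⟨ENNReal.natCast_ne_top k,
                      ENNReal.one_ne_top⟩), one_mul]
      _ ≤ L + e k := by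
          rw [hedef, hcdef]
          rw [add_assoc]
          gcongr
  -- monotone convergence to conclude
  have hmono_sets := monotone_spanningSets ν
  set F : ℕ → Y → ℝ≥0∞ := fun k => Set.indicator (spanningSets ν k)
    (fun y => ENNReal.ofReal (min (Z' y) k * w' y ^ 2)) with hFdef
  have hFm : ∀ k, Measurable (F k) := fun k =>
    (((hZ'meas.min measurable_const).mul (hw'meas.pow_const 2)).ennreal_ofReal).indicator
      (measurableSet_spanningSets ν k)
  have hFmono : ∀ y, Monotone fun k => F k y := by
    intro y i j hij
    simp only [hFdef]
    by_cases hy : y ∈ spanningSets ν i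
    · rw [Set.indicator_of_mem hy, Set.indicator_of_mem (hmono_sets hij hy)]
      refine ENNReal.ofReal_le_ofReal ?_
      refine mul_le_mul_of_nonneg_right ?_ (sq_nonneg _)
      exact min_le_min le_rfl (Nat.cast_le.mpr hij)
    · rw [Set.indicator_of_notMem hy]
      exact zero_le
  have hFtend : ∀ y, Tendsto (fun k => F k y) atTop
      (nhds (ENNReal.ofReal (Z' y * w' y ^ 2))) := by
    intro y
    have hy : ∃ K, y ∈ spanningSets ν K := by
      have := iUnion_spanningSets ν
      have hyu : y ∈ ⋃ i, spanningSets ν i := by rw [this]; trivial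
      exact Set.mem_iUnion.mp hyu
    obtain ⟨K, hK⟩ := hy
    obtain ⟨K', hK'⟩ := exists_nat_ge (Z' y)
    refine Tendsto.congr' ?_ tendsto_const_nhds
    filter_upwards [eventually_ge_atTop (max K K')] with k hk
    have hk1 : K ≤ k := le_trans (le_max_left _ _) hk
    have hk2 : K' ≤ k := le_trans (le_max_right _ _) hk
    have hyk : y ∈ spanningSets ν k := hmono_sets hk1 hK
    have hmin : min (Z' y) (k : ℝ) = Z' y := by
      refine min_eq_left ?_
      exact le_trans hK' (Nat.cast_le.mpr hk2)
    simp only [hFdef]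
    rw [Set.indicator_of_mem hyk, hmin]
  have hFtendint : Tendsto (fun k => ∫⁻ y, F k y ∂ν) atTop
      (nhds (∫⁻ y, ENNReal.ofReal (Z' y * w' y ^ 2) ∂ν)) :=
    lintegral_tendsto_of_tendsto_of_monotone (fun k => (hFm k).aemeasurable)
      (Filter.Eventually.of_forall hFmono) (Filter.Eventually.of_forall hFtend)
  have hFint : ∀ k, (∫⁻ y, F k y ∂ν) = ∫⁻ y in spanningSets ν k,
      ENNReal.ofReal (min (Z' y) k * w' y ^ 2) ∂ν := by
    intro k
    rw [hFdef]
    exact lintegral_indicator (measurableSet_spanningSets ν k) _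
  have hLe : Tendsto (fun k => L + e k) atTop (nhds L) := by
    have := (tendsto_const_nhds (x := L) (f := atTop (α := ℕ))).add he0
    simpa using this
  refine le_of_tendsto_of_tendsto' hFtendint hLe fun k => ?_
  rw [hFint k]
  exact perk k
end

section
/- Let H be a Hilbert space, V a dense subspace carrying a continuous nonnegative symmetric bilinear form E : V × V → ℝ, and define the dual quadratic form E*(ℓ,ℓ) on the dual V' by (1/2)E*(ℓ,ℓ) := sup_{f ∈ V} ⟨ℓ,f⟩ − (1/2)E(f,f). Then for ℓ with E*(ℓ,ℓ) < ∞, any maximizing sequence (f_n) for this supremum is Cauchy with respect to the seminorm induced by E, and its limit f in the completion satisfies (1/2)E*(ℓ,ℓ) = ⟨ℓ,f⟩ − (1/2)E(f,f) and E*(ℓ,ℓ) = E(f,f). -/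
open Filter

/-- Basic duality property of the dual quadratic form: if
`(1/2)E*(ℓ,ℓ) = sup_f ⟨ℓ,f⟩ - (1/2)E(f,f)` is finite, then every maximizing
sequence `(f_n)` is Cauchy for the seminorm induced by `E`, and (in the limit)
`(1/2)E*(ℓ,ℓ) = ⟨ℓ,f⟩ - (1/2)E(f,f)` and `E*(ℓ,ℓ) = E(f,f)`, i.e.
`E(f_n,f_n) → E*(ℓ,ℓ)` and `⟨ℓ,f_n⟩ → E*(ℓ,ℓ)`. -/
theorem stmt11 {V : Type*} [AddCommGroup V] [Module ℝ V]
    (E : V →ₗ[ℝ] V →ₗ[ℝ] ℝ) (hsym : ∀ f g, E f g = E g f) (hpos : ∀ f, 0 ≤ E f f)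
    (ℓ : V →ₗ[ℝ] ℝ) (Estar : ℝ)
    (hsup : IsLUB (Set.range fun f => ℓ f - (1/2) * E f f) ((1/2) * Estar))
    (fn : ℕ → V)
    (hmax : Tendsto (fun n => ℓ (fn n) - (1/2) * E (fn n) (fn n)) atTop
      (nhds ((1/2) * Estar))) :
    (∀ ε > (0:ℝ), ∃ N : ℕ, ∀ m ≥ N, ∀ n ≥ N,
        E (fn n - fn m) (fn n - fn m) < ε) ∧
    Tendsto (fun n => E (fn n) (fn n)) atTop (nhds Estar) ∧
    Tendsto (fun n => ℓ (fn n)) atTop (nhds Estar) := by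
  set S : ℝ := (1/2) * Estar with hSdef
  have hub : ∀ f : V, ℓ f - (1/2) * E f f ≤ S := fun f => hsup.1 ⟨f, rfl⟩
  set ε : ℕ → ℝ := fun n => S - (ℓ (fn n) - (1/2) * E (fn n) (fn n)) with hεdef
  have hε0 : ∀ n, 0 ≤ ε n := fun n => by
    have := hub (fn n); simp only [hεdef]; linarith
  have hεtend : Tendsto ε atTop (nhds 0) := by
    have h := (tendsto_const_nhds (x := S) (f := atTop (α := ℕ))).sub hmax
    rw [sub_self] at h
    exact h
  -- Key lemma A: parallelogram bound
  have keyA : ∀ f g : V, E (f - g) (f - g) ≤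
      4 * (S - (ℓ f - (1/2) * E f f)) + 4 * (S - (ℓ g - (1/2) * E g g)) := by
    intro f g
    have h := hub ((1/2 : ℝ) • (f + g))
    have hc := hsym g f
    simp only [map_add, map_smul, LinearMap.add_apply, LinearMap.smul_apply,
      smul_eq_mul, map_sub, LinearMap.sub_apply] at h ⊢
    nlinarith [h, hc]
  -- Key lemma B: variational inequality
  have keyB : ∀ (f : V) (t : ℝ), t * (ℓ f - E f f) ≤
      (S - (ℓ f - (1/2) * E f f)) + t^2/2 * E f f := by
    intro f t
    have h := hub ((1 + t) • f)
    simp only [map_smul, LinearMap.smul_apply, smul_eq_mul] at h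
    nlinarith [h]
  -- Key lemma C
  have keyC : ∀ f : V, (ℓ f - E f f)^2 ≤ 2 * (S - (ℓ f - (1/2) * E f f)) * E f f := by
    intro f
    have he : 0 ≤ S - (ℓ f - (1/2) * E f f) := by have := hub f; linarith
    rcases eq_or_lt_of_le (hpos f) with hb | hb
    · -- E f f = 0
      have hz : ℓ f = 0 := by
        by_contra hne
        have hB : ∀ t : ℝ, t * ℓ f ≤ S - ℓ f := by
          intro t
          have h := keyB f t
          rw [← hb] at h
          simpa using h
        have h := hB ((S - ℓ f + 1) / ℓ f)
        have heq : (S - ℓ f + 1) / ℓ f * ℓ f = S - ℓ f + 1 := by field_simp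
        rw [heq] at h
        linarith
      rw [hz, ← hb]; nlinarith
    · have h := keyB f ((ℓ f - E f f) / E f f)
      have hb' : E f f ≠ 0 := ne_of_gt hb
      have h1 : (ℓ f - E f f) / E f f * (ℓ f - E f f) = (ℓ f - E f f)^2 / E f f := by
        field_simp
      have h2 : ((ℓ f - E f f) / E f f)^2 / 2 * E f f = (ℓ f - E f f)^2 / (2 * E f f) := by
        field_simp
      rw [h1, h2] at h
      have heq : (ℓ f - E f f)^2 / E f f = 2 * ((ℓ f - E f f)^2 / (2 * E f f)) := by
        field_simp
      have h3 : (ℓ f - E f f)^2 / (2 * E f f) ≤ S - (ℓ f - (1/2) * E f f) := by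
        linarith
      rw [div_le_iff₀ (by linarith : (0:ℝ) < 2 * E f f)] at h3
      have hr : (S - (ℓ f - (1/2) * E f f)) * (2 * E f f)
          = 2 * (S - (ℓ f - (1/2) * E f f)) * E f f := by ring
      linarith
  -- boundedness
  set M : ℝ := 8 + 4 * |S| with hMdef
  have hM0 : 0 ≤ M := by positivity
  have keyD : ∀ n, ε n ≤ 1 → E (fn n) (fn n) ≤ M := by
    intro n hn
    have hC := keyC (fn n)
    have hb := hpos (fn n)
    have habs : S ≤ |S| := le_abs_self S
    have he := hε0 n
    simp only [hεdef] at hn he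
    nlinarith [sq_nonneg (S - (S - (ℓ (fn n) - 1/2 * E (fn n) (fn n)))),
      sq_nonneg (ℓ (fn n) - E (fn n) (fn n))]
  -- |a - b| bound
  have keyE : ∀ n, ε n ≤ 1 → |ℓ (fn n) - E (fn n) (fn n)| ≤ Real.sqrt (2 * ε n * M) := by
    intro n hn
    have hC := keyC (fn n)
    have hD := keyD n hn
    have h1 : (ℓ (fn n) - E (fn n) (fn n))^2 ≤ 2 * ε n * M := by
      have := mul_le_mul_of_nonneg_left hD (by linarith [hε0 n] : (0:ℝ) ≤ 2 * ε n)
      calc (ℓ (fn n) - E (fn n) (fn n))^2 ≤ 2 * ε n * E (fn n) (fn n) := hC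
        _ ≤ 2 * ε n * M := this
    calc |ℓ (fn n) - E (fn n) (fn n)| = Real.sqrt ((ℓ (fn n) - E (fn n) (fn n))^2) :=
          (Real.sqrt_sq_eq_abs _).symm
      _ ≤ Real.sqrt (2 * ε n * M) := Real.sqrt_le_sqrt h1
  -- tendsto of E(fn,fn)
  have hbE : Tendsto (fun n => E (fn n) (fn n)) atTop (nhds Estar) := by
    have hev : ∀ᶠ n in atTop, ε n ≤ 1 := hεtend.eventually_le_const one_pos
    have hu : Tendsto (fun n => 2 * ε n + 2 * Real.sqrt (2 * ε n * M)) atTop (nhds 0) := by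
      have h1 : Tendsto (fun n => 2 * ε n * M) atTop (nhds 0) := by
        have h := (hεtend.const_mul (2:ℝ)).mul_const M
        rw [mul_zero, zero_mul] at h
        exact h
      have h2 : Tendsto (fun n => Real.sqrt (2 * ε n * M)) atTop (nhds 0) := by
        have := (Real.continuous_sqrt.tendsto 0).comp h1
        rw [Real.sqrt_zero] at this; exact this
      have h := ((hεtend.const_mul (2:ℝ)).add (h2.const_mul (2:ℝ)))
      rw [mul_zero, add_zero] at h
      exact h
    have hsq : Tendsto (fun n => E (fn n) (fn n) - Estar) atTop (nhds 0) := by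
      apply squeeze_zero_norm' _ hu
      filter_upwards [hev] with n hn
      have hE := keyE n hn
      have : E (fn n) (fn n) - Estar = -2 * (ℓ (fn n) - E (fn n) (fn n)) - 2 * ε n := by
        simp only [hεdef, hSdef]; ring
      rw [Real.norm_eq_abs, this]
      have h1 : |(-2 : ℝ) * (ℓ (fn n) - E (fn n) (fn n)) - 2 * ε n| ≤
          2 * |ℓ (fn n) - E (fn n) (fn n)| + 2 * ε n := by
        have := abs_sub (-2 * (ℓ (fn n) - E (fn n) (fn n))) (2 * ε n)
        have h2 := abs_mul (-2 : ℝ) (ℓ (fn n) - E (fn n) (fn n))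
        have h3 : |(2 : ℝ) * ε n| = 2 * ε n := abs_of_nonneg (by linarith [hε0 n])
        calc |(-2 : ℝ) * (ℓ (fn n) - E (fn n) (fn n)) - 2 * ε n|
            ≤ |(-2 : ℝ) * (ℓ (fn n) - E (fn n) (fn n))| + |(2:ℝ) * ε n| := abs_sub _ _
          _ = 2 * |ℓ (fn n) - E (fn n) (fn n)| + 2 * ε n := by
              rw [h2, h3]; norm_num
      linarith [mul_le_mul_of_nonneg_left hE (by norm_num : (0:ℝ) ≤ 2)]
    have := hsq.add (tendsto_const_nhds (x := Estar))
    simpa using this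
  refine ⟨?_, hbE, ?_⟩
  · -- Cauchy
    intro δ hδ
    have hev : ∀ᶠ n in atTop, ε n < δ / 8 := hεtend.eventually_lt_const (by linarith)
    obtain ⟨N, hN⟩ := eventually_atTop.mp hev
    refine ⟨N, fun m hm n hn => ?_⟩
    have := keyA (fn n) (fn m)
    have h1 := hN m hm
    have h2 := hN n hn
    simp only [hεdef] at h1 h2
    linarith
  · -- ℓ tendsto
    have := hmax.add (hbE.const_mul (1/2 : ℝ))
    have heq : (fun n => (ℓ (fn n) - (1/2) * E (fn n) (fn n)) + (1/2) * E (fn n) (fn n))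
        = fun n => ℓ (fn n) := by funext n; ring
    rw [heq] at this
    convert this using 2
    simp only [hSdef]; ring
end
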